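/- arXiv:0904.4482 — 5 statements merged into one kernel-verified Lean document; each statement's English description precedes it below -/
import Mathlib

section
/- Every fully residually free group G is a CSA group: every maximal abelian subgroup M of G is malnormal, i.e., for every g ∈ G with g ∉ M one has g⁻¹Mg ∩ M = {1}. -/
/-- A group `G` is *fully residually free* if for every finite set of nontrivial elements
of `G` there is a homomorphism from `G` to a free group sending all of them to nontrivial
elements. -/
def IsFullyResiduallyFree (G : Type*) [Group G] : Prop :=
  ∀ s : Finset G, (∀ g ∈ s, g ≠ 1) →
    ∃ (α : Type) (φ : G →* FreeGroup α), ∀ g ∈ s, φ g ≠ 1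


namespace FRFaux

open FreeGroup

lemma cons_eq_append {α : Type*} (x : α) :
    ∀ (L : List α), x :: L = L ++ [x] → L = List.replicate L.length x := by
  intro L
  induction L with
  | nil => intro _; rfl
  | cons hd tl ih =>
    intro hL
    rw [List.cons_append] at hL
    obtain ⟨rfl, h2⟩ := List.cons.injEq .. ▸ hL
    have := ih h2
    simp [List.length_cons, List.replicate_succ, ← this]

lemma invRev_cons {α : Type*} (x : α × Bool) (L : List (α × Bool)) :
    invRev (x :: L) = invRev L ++ [(x.1, !x.2)] := by
  simp [invRev]

/-- The center of a free group on at least two generators is trivial. -/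
lemma eq_one_of_central {X : Type*} {x y : X} (hxy : x ≠ y) {z : FreeGroup X}
    (hz : ∀ w : FreeGroup X, z * w = w * z) : z = 1 := by
  classical
  by_contra hz1
  have hL : z.toWord ≠ [] := fun h => hz1 (toWord_eq_nil_iff.mp h)
  obtain ⟨⟨a, s⟩, T, hLT⟩ := List.exists_cons_of_ne_nil hL
  -- choose generator g distinct from a
  obtain ⟨g, hga⟩ : ∃ g : X, g ≠ a := by
    rcases eq_or_ne x a with rfl | hxa
    · exact ⟨y, fun hy => hxy hy.symm⟩
    · exact ⟨x, hxa⟩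
  have hred : reduce z.toWord = z.toWord := reduce_toWord z
  have hinvred : reduce (invRev z.toWord) = invRev z.toWord := by
    rw [reduce_invRev, hred]
  have hLinv : invRev z.toWord ≠ [] := fun hh =>
    hL (by rw [← invRev_invRev (L₁ := z.toWord), hh, invRev_empty])
  obtain ⟨⟨a', s'⟩, T', hLT'⟩ := List.exists_cons_of_ne_nil hLinv
  -- the last letter of z.toWord is (a', !s')
  have hlast : z.toWord.getLast hL = (a', !s') := by
    have h0 : invRev (invRev z.toWord) = z.toWord := invRev_invRev
    rw [hLT', invRev_cons] at h0
    have h2 := congrArg List.getLast? h0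
    rw [List.getLast?_append, List.getLast?_eq_getLast hL] at h2
    simpa using h2.symm
  -- choose the sign ε
  set ε : Bool := if a' = g then !s' else true with hε
  have hcond : ¬(g = a' ∧ (!ε) = (!s')) := by
    rintro ⟨rfl, h2⟩
    rw [if_pos rfl] at hε
    rw [hε] at h2
    simp at h2
  -- first computation : (w * z).toWord = (g,ε) :: z.toWord
  have h1 : (FreeGroup.mk [(g, ε)] * z).toWord = (g, ε) :: z.toWord := by
    conv_lhs => rw [← mk_toWord (x := z)]
    have hred' : reduce ((a, s) :: T) = (a, s) :: T := by rw [← hLT]; exact hred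
    rw [mul_mk, toWord_mk, List.singleton_append, hLT, reduce.cons, hred']
    show (if g = a ∧ (ε = !s) then T else (g, ε) :: (a, s) :: T) = _
    rw [if_neg (by rintro ⟨rfl, -⟩; exact hga rfl)]
  -- second computation : (z * w).toWord = z.toWord ++ [(g,ε)]
  have h2 : (z * FreeGroup.mk [(g, ε)]).toWord = z.toWord ++ [(g, ε)] := by
    have hinv : (z * FreeGroup.mk [(g, ε)])⁻¹.toWord = (g, !ε) :: invRev z.toWord := by
      rw [mul_inv_rev, inv_mk]
      conv_lhs => rw [← mk_toWord (x := z⁻¹), toWord_inv]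
      rw [mul_mk]
      have hsing : invRev [(g, ε)] = [(g, !ε)] := by simp [invRev]
      have hinvred' : reduce ((a', s') :: T') = (a', s') :: T' := by
        rw [← hLT']; exact hinvred
      rw [hsing, List.singleton_append, toWord_mk, hLT', reduce.cons, hinvred']
      show (if g = a' ∧ ((!ε) = !s') then T' else (g, !ε) :: (a', s') :: T') = _
      rw [if_neg hcond]
    have h3 := congrArg invRev hinv
    rw [← toWord_inv, inv_inv, invRev_cons, invRev_invRev] at h3
    simpa using h3
  have heq : (g, ε) :: z.toWord = z.toWord ++ [(g, ε)] := by
    rw [← h1, ← h2, hz]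
  have hrep := cons_eq_append _ _ heq
  rw [hLT] at hrep
  have h4 : (a, s) = (g, ε) := by
    have := congrArg List.head? hrep
    simpa [List.replicate_succ] using this
  have h5 : a = g ∧ s = ε := by simpa [Prod.ext_iff] using h4
  exact hga h5.1.symm
/-- A free group on a subsingleton type is cyclic with a generator of infinite order. -/
lemma exists_gen {X : Type*} [Subsingleton X] :
    ∃ c : FreeGroup X, (∀ z : FreeGroup X, ∃ n : ℤ, z = c ^ n) ∧
      (∀ n : ℤ, c ^ n = 1 → c = 1 ∨ n = 0) := by
  rcases isEmpty_or_nonempty X with hX | ⟨⟨x₀⟩⟩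
  · refine ⟨1, fun z => ⟨0, ?_⟩, fun n _ => Or.inl rfl⟩
    induction z using FreeGroup.induction_on with
    | C1 => simp
    | of x => exact hX.elim x
    | inv_of x _ => exact hX.elim x
    | mul p q hp hq => rw [hp, hq]; simp
  · refine ⟨of x₀, fun z => ?_, fun n hn => ?_⟩
    · induction z using FreeGroup.induction_on with
      | C1 => exact ⟨0, by simp⟩
      | of x => exact ⟨1, by rw [zpow_one, Subsingleton.elim x x₀]⟩
      | inv_of x hx => obtain ⟨n, hn⟩ := hx; exact ⟨-n, by rw [zpow_neg, hn]⟩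
      | mul p q hp hq =>
        obtain ⟨n, hn⟩ := hp; obtain ⟨m, hm⟩ := hq
        exact ⟨n + m, by rw [hn, hm, zpow_add]⟩
    · right
      have h2 : (Multiplicative.ofAdd (1:ℤ)) ^ n = 1 := by
        have := congrArg (FreeGroup.lift (fun _ : X => Multiplicative.ofAdd (1 : ℤ))) hn
        simpa using this
      simpa using congrArg Multiplicative.toAdd h2

/-- If all elements of a free group commute, its generators form a subsingleton. -/
lemma generators_subsingleton (K : Type*) [Group K] [IsFreeGroup K]
    (hcomm : ∀ p q : K, p * q = q * p) : Subsingleton (IsFreeGroup.Generators K) := by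
  classical
  by_contra hns
  rw [not_subsingleton_iff_nontrivial] at hns
  obtain ⟨a, b, hab⟩ := hns
  set f : IsFreeGroup.Generators K → Equiv.Perm (Fin 3) :=
    fun t => if t = a then Equiv.swap 0 1 else Equiv.swap 1 2 with hf
  set φ := IsFreeGroup.lift f with hφ
  have h1 : φ (IsFreeGroup.of a) = Equiv.swap 0 1 := by
    rw [hφ, IsFreeGroup.lift_of, hf]; simp
  have h2 : φ (IsFreeGroup.of b) = Equiv.swap 1 2 := by
    rw [hφ, IsFreeGroup.lift_of, hf]; exact if_neg (fun hba => hab hba.symm)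
  have h3 := congrArg φ (hcomm (IsFreeGroup.of a) (IsFreeGroup.of b))
  rw [_root_.map_mul, _root_.map_mul, h1, h2] at h3
  exact absurd h3 (by decide)

/-- An abelian free group is cyclic, with generator of infinite order unless trivial. -/
lemma cyclic_of_comm (K : Type*) [Group K] [IsFreeGroup K]
    (hcomm : ∀ p q : K, p * q = q * p) :
    ∃ c : K, (∀ x : K, ∃ n : ℤ, x = c ^ n) ∧ (∀ n : ℤ, c ^ n = 1 → c = 1 ∨ n = 0) := by
  have := generators_subsingleton K hcomm
  obtain ⟨c', h1, h2⟩ := exists_gen (X := IsFreeGroup.Generators K)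
  set e := IsFreeGroup.toFreeGroup (G := K) with he
  refine ⟨e.symm c', fun x => ?_, fun n hn => ?_⟩
  · obtain ⟨n, hn⟩ := h1 (e x)
    exact ⟨n, by rw [← e.symm_apply_apply x, hn, map_zpow]⟩
  · have := congrArg e hn
    rw [map_zpow, _root_.map_one, e.apply_symm_apply] at this
    rcases h2 n this with h | h
    · exact Or.inl (by rw [h, _root_.map_one])
    · exact Or.inr h

/-- A free group with a nontrivial central element is abelian. -/
lemma comm_of_central (K : Type*) [Group K] [IsFreeGroup K]
    (z : K) (hz : ∀ w : K, z * w = w * z) (hz1 : z ≠ 1) :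
    ∀ p q : K, p * q = q * p := by
  set e := IsFreeGroup.toFreeGroup (G := K) with he
  rcases subsingleton_or_nontrivial (IsFreeGroup.Generators K) with hs | hnt
  · obtain ⟨c', h1, -⟩ := exists_gen (X := IsFreeGroup.Generators K)
    intro p q
    obtain ⟨n, hn⟩ := h1 (e p); obtain ⟨m, hm⟩ := h1 (e q)
    have : e (p * q) = e (q * p) := by
      rw [_root_.map_mul, _root_.map_mul, hn, hm, ← zpow_add, ← zpow_add, add_comm]
    exact e.injective this
  · obtain ⟨a, b, hab⟩ := hnt
    exfalso
    apply hz1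
    have hez : e z = 1 := by
      apply eq_one_of_central hab
      intro w
      have := hz (e.symm w)
      have h2 := congrArg e this
      rwa [_root_.map_mul, _root_.map_mul, e.apply_symm_apply] at h2
    have := congrArg e.symm hez
    rwa [e.symm_apply_apply, _root_.map_one] at this
variable {α : Type*}

/-- Commutation is transitive in free groups (CT property). -/
lemma ct_free (a : FreeGroup α) (ha : a ≠ 1) :
    ∀ x ∈ Subgroup.centralizer {a}, ∀ y ∈ Subgroup.centralizer {a}, x * y = y * x := by
  set C := Subgroup.centralizer ({a} : Set (FreeGroup α)) with hC
  have haC : a ∈ C := Subgroup.mem_centralizer_iff.mpr (by rintro h rfl; rfl)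
  have hcentral : ∀ w : C, (⟨a, haC⟩ : C) * w = w * (⟨a, haC⟩ : C) := by
    rintro ⟨w, hw⟩
    have := Subgroup.mem_centralizer_iff.mp hw a rfl
    exact Subtype.ext this
  have hane : (⟨a, haC⟩ : C) ≠ 1 := fun hh => ha (by simpa using congrArg Subtype.val hh)
  have habel := comm_of_central C ⟨a, haC⟩ hcentral hane
  intro x hx y hy
  exact congrArg Subtype.val (habel ⟨x, hx⟩ ⟨y, hy⟩)

/-- Centralizers in free groups are cyclic. -/
lemma centralizer_cyclic (a : FreeGroup α) (ha : a ≠ 1) :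
    ∃ c : FreeGroup α, c ∈ Subgroup.centralizer {a} ∧
      (∀ x ∈ Subgroup.centralizer ({a} : Set (FreeGroup α)), ∃ n : ℤ, x = c ^ n) ∧
      (∀ n : ℤ, c ^ n = 1 → c = 1 ∨ n = 0) := by
  set C := Subgroup.centralizer ({a} : Set (FreeGroup α)) with hC
  have habel : ∀ p q : C, p * q = q * p := by
    rintro ⟨p, hp⟩ ⟨q, hq⟩
    exact Subtype.ext (ct_free a ha p hp q hq)
  obtain ⟨c, h1, h2⟩ := cyclic_of_comm C habel
  refine ⟨(c : FreeGroup α), c.2, fun x hx => ?_, fun n hn => ?_⟩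
  · obtain ⟨n, hn⟩ := h1 ⟨x, hx⟩
    exact ⟨n, by simpa [SubgroupClass.coe_zpow] using congrArg Subtype.val hn⟩
  · have : c ^ n = 1 := Subtype.ext (by simpa [SubgroupClass.coe_zpow] using hn)
    rcases h2 n this with hh | hh
    · exact Or.inl (by simpa using congrArg Subtype.val hh)
    · exact Or.inr hh

/-- Free groups are torsion-free. -/
lemma torsionfree (x : FreeGroup α) (n : ℤ) (hx : x ^ n = 1) : x = 1 ∨ n = 0 := by
  set H := Subgroup.zpowers x with hH
  have hxH : x ∈ H := Subgroup.mem_zpowers x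
  have habel : ∀ p q : H, p * q = q * p := by
    rintro ⟨p, hp⟩ ⟨q, hq⟩
    obtain ⟨i, rfl⟩ := Subgroup.mem_zpowers_iff.mp hp
    obtain ⟨j, rfl⟩ := Subgroup.mem_zpowers_iff.mp hq
    exact Subtype.ext (by simp [← zpow_add, add_comm])
  obtain ⟨c, h1, h2⟩ := cyclic_of_comm H habel
  obtain ⟨p, hp⟩ := h1 ⟨x, hxH⟩
  have hxc : x = (c : FreeGroup α) ^ p := by
    simpa [SubgroupClass.coe_zpow] using congrArg Subtype.val hp
  have hcpn' : (c : FreeGroup α) ^ (p * n) = 1 := by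
    rw [zpow_mul, ← hxc]; exact hx
  have hcpn : c ^ (p * n) = 1 := by
    apply Subtype.ext
    rw [SubgroupClass.coe_zpow]
    simpa using hcpn'
  rcases h2 _ hcpn with hh | hh
  · left; rw [hxc, hh]; simp
  · rcases mul_eq_zero.mp hh with hp0 | hn0
    · left; rw [hxc, hp0, zpow_zero]
    · exact Or.inr hn0

/-- Malnormality-type property in free groups: if `a ≠ 1` commutes with `b⁻¹ * a * b`,
then `a` commutes with `b`. -/
lemma mal_free (a b : FreeGroup α) (ha : a ≠ 1)
    (hcomm : a * (b⁻¹ * a * b) = (b⁻¹ * a * b) * a) : a * b = b * a := by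
  obtain ⟨c, hcC, hgen, htor⟩ := centralizer_cyclic a ha
  have hc1 : c ≠ 1 := by
    rintro rfl
    obtain ⟨n, hn⟩ := hgen a (Subgroup.mem_centralizer_iff.mpr (by rintro h rfl; rfl))
    exact ha (by rw [hn, one_zpow])
  have hca : a * c = c * a := Subgroup.mem_centralizer_iff.mp hcC a rfl
  -- a = c ^ i
  obtain ⟨i, hi⟩ := hgen a (Subgroup.mem_centralizer_iff.mpr (by rintro h rfl; rfl))
  set a' := b⁻¹ * a * b with ha'def
  have ha' : a' ≠ 1 := by
    rintro hh
    apply ha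
    have h2 : b * a' * b⁻¹ = a := by rw [ha'def]; group
    rw [← h2, hh]; simp
  -- a' = c ^ j
  obtain ⟨j, hj⟩ := hgen a' (Subgroup.mem_centralizer_iff.mpr (by rintro h rfl; exact hcomm))
  -- d := b⁻¹ * c * b commutes with a', and c commutes with a'
  set d := b⁻¹ * c * b with hddef
  have hda' : d * a' = a' * d := by
    have : c * a = a * c := hca.symm
    calc d * a' = b⁻¹ * (c * a) * b := by rw [hddef, ha'def]; group
    _ = b⁻¹ * (a * c) * b := by rw [this]
    _ = a' * d := by rw [hddef, ha'def]; group
  have hca' : c * a' = a' * c := by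
    rw [hj, ← zpow_add_one, ← zpow_one_add, add_comm]
  -- hence d commutes with c (both centralize a' ≠ 1)
  have hdc : d * c = c * d :=
    ct_free a' ha' d (Subgroup.mem_centralizer_iff.mpr (by rintro h rfl; exact hda'.symm))
      c (Subgroup.mem_centralizer_iff.mpr (by rintro h rfl; exact hca'.symm))
  -- hence d commutes with a = c^i, so d = c^n
  have hda : a * d = d * a := by
    have hcd : Commute c d := hdc.symm
    rw [hi]
    exact hcd.zpow_left i
  obtain ⟨n, hnd⟩ := hgen d (Subgroup.mem_centralizer_iff.mpr (by rintro h rfl; exact hda))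
  set d' := b * c * b⁻¹ with hd'def
  have hd'a : a * d' = d' * a := by
    have h1 : b * (a' * c) * b⁻¹ = a * d' := by rw [ha'def, hd'def]; group
    have h2 : b * (c * a') * b⁻¹ = d' * a := by rw [ha'def, hd'def]; group
    rw [← h1, ← h2, hca']
  obtain ⟨k, hk⟩ := hgen d' (Subgroup.mem_centralizer_iff.mpr (by rintro h rfl; exact hd'a))
  -- c = d'^n = c^(k*n)
  have hcd'n : c = d' ^ n := by
    rw [hd'def, conj_zpow, ← hnd, hddef]
    group
  have hckn : c ^ (k * n) = c := by
    rw [zpow_mul, ← hk, ← hcd'n]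
  have hckn1 : c ^ (k * n - 1) = 1 := by
    rw [zpow_sub, hckn, zpow_one]
    group
  rcases htor _ hckn1 with hh | hh
  · exact absurd hh hc1
  have hkn : k * n = 1 := by omega
  have hn1 : n = 1 ∨ n = -1 := Int.isUnit_iff.mp (IsUnit.of_mul_eq_one (a := n) k (by rw [mul_comm]; exact hkn))
  rcases hn1 with rfl | rfl
  · -- d = c, so b commutes with c, hence with a = c^i
    rw [zpow_one] at hnd
    have hbc : Commute b c := by
      have h1 : b * d * b⁻¹ = c := by rw [hddef]; group
      rw [hnd] at h1
      have : b * c = c * b := by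
        have := congrArg (fun t => t * b) h1
        simpa [mul_assoc] using this
      exact this
    rw [hi]
    exact (hbc.zpow_right i).symm
  · -- d = c⁻¹
    rw [zpow_neg_one] at hnd
    have hbbc : (b * b)⁻¹ * c * (b * b) = c := by
      have h1 : b⁻¹ * c * b = c⁻¹ := by rw [← hnd, hddef]
      calc (b * b)⁻¹ * c * (b * b) = b⁻¹ * (b⁻¹ * c * b) * b := by group
      _ = b⁻¹ * c⁻¹ * b := by rw [h1]
      _ = (b⁻¹ * c * b)⁻¹ := by group
      _ = (c⁻¹)⁻¹ := by rw [h1]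
      _ = c := inv_inv c
    have hbba : a * (b * b) = (b * b) * a := by
      have hbbc' : c * (b * b) = (b * b) * c := by
        have := congrArg (fun t => (b * b) * t) hbbc
        simpa [mul_assoc] using this
      have : Commute (b*b) c := hbbc'.symm
      rw [hi]
      exact (this.zpow_right i).symm
    obtain ⟨m, hm⟩ := hgen (b * b) (Subgroup.mem_centralizer_iff.mpr (by rintro h rfl; exact hbba))
    rcases eq_or_ne m 0 with rfl | hm0
    · have hbb1 : b * b = 1 := by rw [hm, zpow_zero]
      have hb2 : b ^ (2 : ℤ) = 1 := by
        rw [show (2:ℤ) = 1 + 1 by norm_num, zpow_add, zpow_one]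
        exact hbb1
      rcases torsionfree b 2 hb2 with rfl | hh
      · exfalso
        apply hc1
        have : c = c⁻¹ := by rw [← hnd, hddef]; group
        have hc2 : c ^ (2:ℤ) = 1 := by
          rw [show (2:ℤ) = 1 + 1 by norm_num, zpow_add, zpow_one]
          nth_rewrite 1 [this]
          group
        rcases torsionfree c 2 hc2 with h | h
        · exact h
        · exact absurd h (by norm_num)
      · exact absurd hh (by norm_num)
    · exfalso
      have hcm1 : c ^ m ≠ 1 := by
        intro hh
        rcases htor m hh with h | h
        · exact hc1 h
        · exact hm0 h
      have hbcm : c ^ m * b = b * c ^ m := by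
        rw [← hm]
        group
      have hccm : c ^ m * c = c * c ^ m := by
        rw [← zpow_add_one, ← zpow_one_add, add_comm]
      have hbc : b * c = c * b :=
        ct_free (c ^ m) hcm1 b (Subgroup.mem_centralizer_iff.mpr (by rintro h rfl; exact hbcm))
          c (Subgroup.mem_centralizer_iff.mpr (by rintro h rfl; exact hccm))
      apply hc1
      have hdc2 : c = c⁻¹ := by
        rw [← hnd, hddef]
        rw [show b⁻¹ * c * b = b⁻¹ * (c * b) by group, ← hbc]
        group
      have hc2 : c ^ (2:ℤ) = 1 := by
        rw [show (2:ℤ) = 1 + 1 by norm_num, zpow_add, zpow_one]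
        nth_rewrite 1 [hdc2]
        group
      rcases torsionfree c 2 hc2 with h | h
      · exact h
      · exact absurd h (by norm_num)

end FRFaux

namespace FRFaux

open scoped commutatorElement

/-- Fully residually free groups are commutative transitive. -/
lemma ct_of_frf {G : Type*} [Group G] (h : IsFullyResiduallyFree G) {p q r : G}
    (hp : p ≠ 1) (hq : q * p = p * q) (hr : r * p = p * r) : q * r = r * q := by
  classical
  by_contra hqr
  have hco : ⁅q, r⁆ ≠ 1 := fun h1 => hqr (commutatorElement_eq_one_iff_commute.mp h1)
  obtain ⟨α, φ, hφ⟩ := h {p, ⁅q, r⁆} (by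
    intro t ht
    rcases Finset.mem_insert.mp ht with rfl | ht
    · exact hp
    · rw [Finset.mem_singleton] at ht; subst ht; exact hco)
  have h1 : φ p ≠ 1 := hφ p (by simp)
  have h2 : φ ⁅q, r⁆ ≠ 1 := hφ _ (by simp)
  apply h2
  rw [map_commutatorElement]
  refine commutatorElement_eq_one_iff_commute.mpr ?_
  have hmem : ∀ t : G, t * p = p * t → φ t ∈ Subgroup.centralizer {φ p} := by
    intro t ht
    refine Subgroup.mem_centralizer_iff.mpr ?_
    rintro u hu
    rw [Set.mem_singleton_iff] at hu; subst hu
    simpa [map_mul] using (congrArg φ ht).symm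
  exact ct_free (φ p) h1 (φ q) (hmem q hq) (φ r) (hmem r hr)

/-- Malnormality-type consequence in fully residually free groups. -/
lemma mal_of_frf {G : Type*} [Group G] (h : IsFullyResiduallyFree G) {m g : G}
    (hm : m ≠ 1) (hcomm : m * (g⁻¹ * m * g) = (g⁻¹ * m * g) * m) : m * g = g * m := by
  classical
  by_contra hmg
  have hco : ⁅m, g⁆ ≠ 1 := fun h1 => hmg (commutatorElement_eq_one_iff_commute.mp h1)
  obtain ⟨α, φ, hφ⟩ := h {m, ⁅m, g⁆} (by
    intro t ht
    rcases Finset.mem_insert.mp ht with rfl | ht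
    · exact hm
    · rw [Finset.mem_singleton] at ht; subst ht; exact hco)
  have h1 : φ m ≠ 1 := hφ m (by simp)
  have h2 : φ ⁅m, g⁆ ≠ 1 := hφ _ (by simp)
  apply h2
  rw [map_commutatorElement]
  refine commutatorElement_eq_one_iff_commute.mpr ?_
  apply mal_free (φ m) (φ g) h1
  simpa [map_mul, map_inv, mul_assoc] using congrArg φ hcomm

end FRFaux


/-- Every fully residually free group is a CSA group: every maximal abelian subgroup `M`
is malnormal, i.e. `g⁻¹ M g ∩ M = {1}` for every `g ∉ M`. -/
theorem fullyResiduallyFree_CSA {G : Type*} [Group G]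
    (h : IsFullyResiduallyFree G) (M : Subgroup G)
    (habelian : ∀ a ∈ M, ∀ b ∈ M, a * b = b * a)
    (hmax : ∀ N : Subgroup G, (∀ a ∈ N, ∀ b ∈ N, a * b = b * a) → M ≤ N → N = M)
    (g : G) (hg : g ∉ M) :
    ∀ m ∈ M, g⁻¹ * m * g ∈ M → m = 1 := by
  intro m hm hgm
  by_contra hm1
  -- m commutes with g
  have hcomm : m * (g⁻¹ * m * g) = (g⁻¹ * m * g) * m := habelian m hm _ hgm
  have hmg : m * g = g * m := FRFaux.mal_of_frf h hm1 hcomm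
  -- the centralizer of m is abelian and contains M
  set N := Subgroup.centralizer ({m} : Set G) with hN
  have habN : ∀ a ∈ N, ∀ b ∈ N, a * b = b * a := by
    intro a ha b hb
    have ha' : m * a = a * m := Subgroup.mem_centralizer_iff.mp ha m rfl
    have hb' : m * b = b * m := Subgroup.mem_centralizer_iff.mp hb m rfl
    exact FRFaux.ct_of_frf h hm1 ha'.symm hb'.symm
  have hMN : M ≤ N := by
    intro x hx
    refine Subgroup.mem_centralizer_iff.mpr ?_
    rintro u hu
    rw [Set.mem_singleton_iff] at hu; rw [hu]
    exact habelian m hm x hx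
  have hNM : N = M := hmax N habN hMN
  apply hg
  rw [← hNM]
  refine Subgroup.mem_centralizer_iff.mpr ?_
  rintro u hu
  rw [Set.mem_singleton_iff] at hu; rw [hu]
  exact hmg
end

section
/- Every 2-generated subgroup of a fully residually free group is either a free group or an abelian group. -/
open Function

/-- Any partial injection on a finite type extends to a permutation. -/
lemma exists_perm_of_partial {X : Type} [Finite X]
    (g : X → Option X) (hinj : ∀ x y z, g x = some z → g y = some z → x = y) :
    ∃ σ : Equiv.Perm X, ∀ x z, g x = some z → σ x = z := by
  classical
  let p : X → Prop := fun x => (g x).isSome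
  let q : X → Prop := fun z => ∃ x, g x = some z
  have hb : Function.Bijective
      (fun x : {x // p x} => (⟨(g x.1).get x.2, x.1, (Option.some_get x.2).symm⟩ : {z // q z})) := by
    constructor
    · rintro ⟨x, hx⟩ ⟨y, hy⟩ hxy
      simp only [Subtype.mk.injEq] at hxy ⊢
      refine hinj x y ((g y).get hy) ?_ (Option.some_get hy).symm
      rw [← hxy]; exact (Option.some_get hx).symm
    · rintro ⟨z, x, hxz⟩
      have hx : p x := by simp [p, hxz]
      refine ⟨⟨x, hx⟩, ?_⟩
      simp [Subtype.ext_iff, hxz]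
  let e := Equiv.ofBijective _ hb
  refine ⟨e.extendSubtype, fun x z hxz => ?_⟩
  have hx : p x := by simp [p, hxz]
  have := e.extendSubtype_apply_of_mem x hx
  rw [this]
  show ((g x).get hx : X) = z
  simp [hxz]

/-- Free groups are residually finite: witnesses in symmetric groups. -/
lemma freeGroup_residually_finite {α : Type} [DecidableEq α] (w : FreeGroup α) (hw : w ≠ 1) :
    ∃ (k : ℕ) (χ : FreeGroup α →* Equiv.Perm (Fin k)), χ w ≠ 1 := by
  classical
  set L : List (α × Bool) := w.toWord with hL
  set n : ℕ := L.length with hn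
  have hn0 : 0 < n := by
    rcases Nat.eq_zero_or_pos n with h | h
    · refine absurd (FreeGroup.toWord_eq_nil_iff.1 (List.length_eq_zero_iff.1 ?_)) hw
      rw [← hL] at *; omega
    · exact h
  -- no cancellation in the reduced word
  have nocancel : ∀ (i : ℕ) (x : α) (b : Bool),
      L[i]? = some (x, b) → L[i+1]? = some (x, !b) → False := by
    intro i x b h1 h2
    obtain ⟨hi1, e1⟩ := List.getElem?_eq_some_iff.1 h1
    obtain ⟨hi2, e2⟩ := List.getElem?_eq_some_iff.1 h2
    have hdec : L = L.take i ++ (x, b) :: (x, !b) :: L.drop (i+2) := by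
      conv_lhs => rw [← List.take_append_drop i L]
      rw [List.drop_eq_getElem_cons hi1, e1]
      congr 2
      rw [List.drop_eq_getElem_cons hi2, e2]
    exact FreeGroup.reduce.not ((FreeGroup.reduce_toWord w).trans hdec)
  -- the constraints
  set U : α → ℕ → Prop := fun a j => j < n ∧ L[n-1-j]? = some (a, true) with hU
  set D : α → ℕ → Prop := fun a j => 0 < j ∧ j ≤ n ∧ L[n-j]? = some (a, false) with hD
  have hUD : ∀ a j, U a j → D a j → False := by
    rintro a j ⟨hj, h1⟩ ⟨hj0, hjn, h2⟩
    have : n - j = (n - 1 - j) + 1 := by omega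
    exact nocancel (n-1-j) a true h1 (by rw [← this]; exact h2)
  have hUdec : ∀ a j, Decidable (U a j) := fun a j => by rw [hU]; infer_instance
  have hDdec : ∀ a j, Decidable (D a j) := fun a j => by rw [hD]; infer_instance
  let g : α → Fin (n+1) → Option (Fin (n+1)) := fun a j =>
    if h : U a j.1 then some ⟨j.1 + 1, by omega⟩
    else if h' : D a j.1 then some ⟨j.1 - 1, by omega⟩ else none
  have gchar : ∀ a (x z : Fin (n+1)), g a x = some z →
      (U a x.1 ∧ z.1 = x.1 + 1) ∨ (D a x.1 ∧ z.1 = x.1 - 1) := by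
    intro a x z hxz
    simp only [g] at hxz
    split_ifs at hxz with h1 h2
    · left; injection hxz with hxz; exact ⟨h1, by rw [← hxz]⟩
    · right; injection hxz with hxz; exact ⟨h2, by rw [← hxz]⟩
  have ginj : ∀ a (x y z : Fin (n+1)), g a x = some z → g a y = some z → x = y := by
    intro a x y z hx hy
    rcases gchar a x z hx with ⟨hx1, hx2⟩ | ⟨hx1, hx2⟩ <;>
      rcases gchar a y z hy with ⟨hy1, hy2⟩ | ⟨hy1, hy2⟩
    · exact Fin.ext (by omega)
    · exfalso
      obtain ⟨hxn, hxw⟩ := hx1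
      obtain ⟨hy0, hyn, hyw⟩ := hy1
      refine nocancel (n - y.1) a false hyw ?_
      have h2 : n - y.1 + 1 = n - 1 - x.1 := by omega
      rw [h2]; exact hxw
    · exfalso
      obtain ⟨hyn, hyw⟩ := hy1
      obtain ⟨hx0, hxn, hxw⟩ := hx1
      refine nocancel (n - x.1) a false hxw ?_
      have h2 : n - x.1 + 1 = n - 1 - y.1 := by omega
      rw [h2]; exact hyw
    · obtain ⟨hx0, hxn, -⟩ := hx1
      obtain ⟨hy0, hyn, -⟩ := hy1
      exact Fin.ext (by omega)
  choose sig hsig using fun a => exists_perm_of_partial (g a) (ginj a)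
  have gU : ∀ a (j : ℕ) (hj : j < n), U a j → sig a ⟨j, by omega⟩ = ⟨j + 1, by omega⟩ := by
    intro a j hj hu
    refine hsig a _ _ ?_
    simp only [g]
    rw [dif_pos hu]
  have gD : ∀ a (j : ℕ) (hj : j ≤ n) (hj2 : 0 < j),
      D a j → sig a ⟨j, by omega⟩ = ⟨j - 1, by omega⟩ := by
    intro a j hj hj2 hd
    refine hsig a _ _ ?_
    simp only [g]
    rw [dif_neg (fun hu => hUD a j hu hd), dif_pos hd]
  -- the homomorphism
  let χ : FreeGroup α →* Equiv.Perm (Fin (n+1)) := FreeGroup.lift sig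
  have walk : ∀ (k : ℕ) (m : ℕ), m ≤ n → n - m = k →
      χ (FreeGroup.mk (L.drop m)) ⟨0, by omega⟩ = ⟨n - m, by omega⟩ := by
    intro k
    induction k with
    | zero =>
      intro m hm hk
      have hmn : m = n := by omega
      subst hmn
      rw [List.drop_length]
      show χ 1 _ = _
      rw [map_one]
      simp only [Equiv.Perm.one_apply]
      exact Fin.ext (by simp only [Fin.val_mk]; omega)
    | succ k ih =>
      intro m hm hk
      have hmn : m < n := by omega
      rcases he : L[m] with ⟨a, e⟩
      have hdrop : L.drop m = (a, e) :: L.drop (m+1) := by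
        rw [← he]; exact List.drop_eq_getElem_cons hmn
      have hsplit : FreeGroup.mk (L.drop m) =
          FreeGroup.mk [(a, e)] * FreeGroup.mk (L.drop (m+1)) := by
        rw [FreeGroup.mul_mk]; rw [hdrop]; rfl
      rw [hsplit, map_mul, Equiv.Perm.mul_apply, ih (m+1) (by omega) (by omega)]
      have hgm : L[m]? = some (a, e) := by
        rw [← he]; exact List.getElem?_eq_some_iff.2 ⟨hmn, rfl⟩
      have hform : χ (FreeGroup.mk [(a, e)]) = bif e then sig a else (sig a)⁻¹ := by
        show FreeGroup.lift sig (FreeGroup.mk [(a, e)]) = _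
        rw [FreeGroup.lift_mk]
        simp
      rw [hform]
      cases e with
      | true =>
        show sig a _ = _
        have hu : U a (n - (m+1)) :=
          ⟨by omega, by rw [show n-1-(n-(m+1)) = m by omega]; exact hgm⟩
        refine hsig a _ _ ?_
        simp only [g]
        rw [dif_pos hu]
        exact congrArg some (Fin.ext (by simp only [Fin.val_mk]; omega))
      | false =>
        show (sig a)⁻¹ _ = _
        have hd : D a (n - m) :=
          ⟨by omega, by omega, by rw [show n-(n-m) = m by omega]; exact hgm⟩
        rw [Equiv.Perm.inv_def, Equiv.symm_apply_eq]
        refine (hsig a _ _ ?_).symm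
        simp only [g]
        rw [dif_neg (fun hu => hUD a (n-m) hu hd), dif_pos hd]
        exact congrArg some (Fin.ext (by simp only [Fin.val_mk]; omega))
  have h0 : χ w ⟨0, by omega⟩ = ⟨n, by omega⟩ := by
    have := walk n 0 (by omega) (by omega)
    have hmkL : FreeGroup.mk L = w := FreeGroup.mk_toWord
    rw [List.drop_zero, hmkL] at this
    simpa using this
  refine ⟨n + 1, χ, fun hone => ?_⟩
  rw [hone] at h0
  have : (0 : ℕ) = n := congrArg Fin.val h0
  omega

/-- Free groups of rank 2 are Hopfian. -/
lemma freeGroupBool_hopfian (σ : FreeGroup Bool →* FreeGroup Bool)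
    (hσ : Function.Surjective σ) : Function.Injective σ := by
  classical
  rw [injective_iff_map_eq_one]
  intro w hwker
  by_contra hw
  obtain ⟨k, χ, hχ⟩ := freeGroup_residually_finite w hw
  set P := Equiv.Perm (Fin k)
  have : Finite (FreeGroup Bool →* P) := Finite.of_equiv _ FreeGroup.lift
  have hT : Function.Injective (fun χ' : FreeGroup Bool →* P => χ'.comp σ) := by
    intro x y hxy
    exact (MonoidHom.cancel_right hσ).1 hxy
  obtain ⟨χ', hχ'⟩ := Finite.injective_iff_surjective.1 hT χ
  apply hχ
  have hχ'2 : χ'.comp σ = χ := hχ'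
  rw [← hχ'2]
  show χ' (σ w) = 1
  rw [hwker, map_one]

/-- Free groups over a subsingleton are commutative. -/
lemma freeGroup_commute_of_subsingleton {γ : Type} [Subsingleton γ]
    (x y : FreeGroup γ) : Commute x y := by
  have base : ∀ c d : γ, Commute (FreeGroup.of c) (FreeGroup.of d) := by
    intro c d
    rw [Subsingleton.elim c d]
  induction x using FreeGroup.induction_on with
  | C1 => exact Commute.one_left y
  | of c =>
    induction y using FreeGroup.induction_on with
    | C1 => exact Commute.one_right _
    | of d => exact base c d
    | inv_of d _ => exact (base c d).inv_right
    | mul y z hy hz => exact hy.mul_right hz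
  | inv_of c hc => exact hc.inv_left
  | mul x z hx hz => exact hx.mul_left hz

/-- Two non-commuting elements of a free group generate a free group freely. -/
lemma lift_injective_of_not_commute {α : Type} {u v : FreeGroup α}
    (huv : ¬ Commute u v) :
    Function.Injective (FreeGroup.lift (fun i : Bool => cond i u v)) := by
  classical
  set ψ := FreeGroup.lift (fun i : Bool => cond i u v) with hψ
  set K := ψ.range with hK
  -- K is a free group by Nielsen-Schreier
  let β := IsFreeGroup.Generators K
  let ι : K ≃* FreeGroup β := IsFreeGroup.toFreeGroup K
  let π : FreeGroup Bool →* FreeGroup β := ι.toMonoidHom.comp ψ.rangeRestrict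
  have hπ : Function.Surjective π :=
    ι.surjective.comp ψ.rangeRestrict_surjective
  -- counting homs into Z/2 bounds the rank by 2
  set M := Multiplicative (ZMod 2) with hM
  have hMcard : Fintype.card M = 2 := rfl
  have hembed : (β → M) ↪ (Bool → M) := by
    refine ⟨fun f => (FreeGroup.lift).symm ((FreeGroup.lift f).comp π), ?_⟩
    intro f f' hff
    have h1 : (FreeGroup.lift f).comp π = (FreeGroup.lift f').comp π := by
      have := congrArg FreeGroup.lift hff
      simpa using this
    have h2 : FreeGroup.lift f = FreeGroup.lift f' := (MonoidHom.cancel_right hπ).1 h1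
    have := congrArg FreeGroup.lift.symm h2
    simpa using this
  have hfinβM : Finite (β → M) := Finite.of_injective _ hembed.injective
  have hfinβ : Finite β := by
    have hb : Function.Injective
        (fun b : β => (fun c : β => if c = b then Multiplicative.ofAdd (1 : ZMod 2) else 1)) := by
      intro b b' hbb'
      have := congrFun hbb' b
      simp only [if_pos rfl] at this
      by_contra hne
      rw [if_neg hne] at this
      exact absurd this (by decide)
    exact Finite.of_injective _ hb
  have hfinβM2 : Fintype β := Fintype.ofFinite β
  have hcard : Fintype.card β ≤ 2 := by
    have h1 : Fintype.card (β → M) ≤ Fintype.card (Bool → M) :=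
      Fintype.card_le_of_embedding hembed
    rw [Fintype.card_fun, Fintype.card_fun, hMcard, Fintype.card_bool] at h1
    exact (Nat.pow_le_pow_iff_right (by norm_num)).1 h1
  -- u and v lie in K and do not commute, so K is nonabelian and the rank is exactly 2
  have hu : ψ (FreeGroup.of true) = u := by rw [hψ, FreeGroup.lift_apply_of]; rfl
  have hv : ψ (FreeGroup.of false) = v := by rw [hψ, FreeGroup.lift_apply_of]; rfl
  have hcard2 : Fintype.card β = 2 := by
    rcases Nat.lt_or_ge (Fintype.card β) 2 with hlt | hge
    · exfalso
      have hsub : Subsingleton β := Fintype.card_le_one_iff_subsingleton.1 (by omega)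
      apply huv
      have hcomm : Commute (ψ.rangeRestrict (FreeGroup.of true))
          (ψ.rangeRestrict (FreeGroup.of false)) := by
        have := freeGroup_commute_of_subsingleton (γ := β)
          (ι (ψ.rangeRestrict (FreeGroup.of true))) (ι (ψ.rangeRestrict (FreeGroup.of false)))
        have hmul := this
        unfold Commute SemiconjBy at hmul ⊢
        apply ι.injective
        rw [map_mul, map_mul, hmul]
      have := congrArg (Subgroup.subtype K) hcomm
      simp only [map_mul] at this
      unfold Commute SemiconjBy
      have et : (K.subtype) (ψ.rangeRestrict (FreeGroup.of true)) = u := by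
        rw [← hu]; rfl
      have ef : (K.subtype) (ψ.rangeRestrict (FreeGroup.of false)) = v := by
        rw [← hv]; rfl
      rwa [et, ef] at this
    · omega
  let e : β ≃ Bool := Fintype.equivOfCardEq (by rw [hcard2, Fintype.card_bool])
  let σ : FreeGroup Bool →* FreeGroup Bool :=
    (FreeGroup.freeGroupCongr e).toMonoidHom.comp π
  have hσsurj : Function.Surjective σ :=
    (FreeGroup.freeGroupCongr e).surjective.comp hπ
  have hσinj : Function.Injective σ := freeGroupBool_hopfian σ hσsurj
  have hπinj : Function.Injective π := by
    intro x y hxy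
    exact hσinj (by show (FreeGroup.freeGroupCongr e) (π x) = _; rw [hxy]; rfl)
  intro x y hxy
  apply hπinj
  show ι (ψ.rangeRestrict x) = ι (ψ.rangeRestrict y)
  congr 1
  exact Subtype.ext hxy



/-- Every 2-generated subgroup of a fully residually free group is either free or abelian. -/
theorem two_generated_subgroup_free_or_abelian {G : Type*} [Group G]
    (h : IsFullyResiduallyFree G) (a b : G) :
    (∃ α : Type, Nonempty ((Subgroup.closure {a, b}) ≃* FreeGroup α)) ∨
      (∀ x ∈ Subgroup.closure ({a, b} : Set G), ∀ y ∈ Subgroup.closure ({a, b} : Set G),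
        x * y = y * x) := by
  classical
  by_cases hab : Commute a b
  · right
    have step1 : ∀ x ∈ Subgroup.closure ({a, b} : Set G),
        ∀ g ∈ ({a, b} : Set G), Commute g x := by
      intro x hx
      induction hx using Subgroup.closure_induction with
      | mem z hz =>
        intro g hg
        simp only [Set.mem_insert_iff, Set.mem_singleton_iff] at hz hg
        rcases hg with rfl | rfl <;> rcases hz with rfl | rfl
        exacts [Commute.refl _, hab, hab.symm, Commute.refl _]
      | one => exact fun g _ => Commute.one_right g
      | mul y z _ _ hy hz => exact fun g hg => (hy g hg).mul_right (hz g hg)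
      | inv y _ hy => exact fun g hg => (hy g hg).inv_right
    intro x hx y hy
    have step2 : Commute x y := by
      induction hy using Subgroup.closure_induction with
      | mem z hz => exact (step1 x hx z hz).symm
      | one => exact Commute.one_right x
      | mul p q _ _ hp hq => exact hp.mul_right hq
      | inv p _ hp => exact hp.inv_right
    exact step2
  · left
    have hc : (a * b * a⁻¹ * b⁻¹ : G) ≠ 1 := by
      intro hone
      exact hab (commutatorElement_eq_one_iff_commute.1 hone)
    obtain ⟨α, φ, hφ⟩ := h {a * b * a⁻¹ * b⁻¹} (by
      intro g hg
      rw [Finset.mem_singleton] at hg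
      subst hg; exact hc)
    have hφc : φ (a * b * a⁻¹ * b⁻¹) ≠ 1 := hφ _ (Finset.mem_singleton_self _)
    have hφab : ¬ Commute (φ a) (φ b) := by
      intro hcm
      apply hφc
      have : φ (a * b * a⁻¹ * b⁻¹) = φ a * φ b * (φ a)⁻¹ * (φ b)⁻¹ := by
        simp [map_mul, map_inv]
      rw [this]
      exact commutatorElement_eq_one_iff_commute.2 hcm
    set ε : FreeGroup Bool →* G := FreeGroup.lift (fun i : Bool => cond i a b) with hε
    have hcomp : ∀ x, φ (ε x) = FreeGroup.lift (fun i : Bool => cond i (φ a) (φ b)) x := by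
      intro x
      have : φ.comp ε = FreeGroup.lift (fun i : Bool => cond i (φ a) (φ b)) := by
        apply FreeGroup.ext_hom
        intro i
        cases i <;> simp [hε]
      exact DFunLike.congr_fun this x
    have hεinj : Function.Injective ε := by
      have hψ : Function.Injective (⇑φ ∘ ⇑ε) := by
        have heq : ⇑φ ∘ ⇑ε = ⇑(FreeGroup.lift (fun i : Bool => cond i (φ a) (φ b))) :=
          funext hcomp
        rw [heq]
        exact lift_injective_of_not_commute hφab
      exact Function.Injective.of_comp hψ
    have hrange : ε.range = Subgroup.closure ({a, b} : Set G) := by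
      rw [hε, FreeGroup.range_lift_eq_closure]
      congr 1
      ext x
      constructor
      · rintro ⟨i, rfl⟩
        cases i
        · right; rfl
        · left; rfl
      · rintro (rfl | hx)
        · exact ⟨true, rfl⟩
        · rw [Set.mem_singleton_iff] at hx; subst hx; exact ⟨false, rfl⟩
    exact ⟨Bool, ⟨(MulEquiv.subgroupCongr hrange.symm).trans
      (MonoidHom.ofInjective hεinj).symm⟩⟩
end

section
/- Every finitely generated fully residually free group G is linear; more precisely, there is an ultrafilter u on ℕ such that G embeds into SL₂ of the ultrapower of the ring ℤ along u, i.e., there is an injective group homomorphism from G into SL₂(ℤ^ℕ/u). -/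
namespace FRFaux

open Matrix Pointwise

abbrev SL2Z := Matrix.SpecialLinearGroup (Fin 2) ℤ

def c (k : ℕ) : ℤ := 8 * ((k : ℤ) + 1) ^ 2

def a (k : ℕ) : SL2Z :=
  ⟨!![1 - c k * k, c k; -(c k * (k:ℤ) ^ 2), 1 + c k * k], by
    simp [Matrix.det_fin_two_of]; ring⟩

/-- Nonzero vectors of the real plane. -/
def V : Type := {x : Fin 2 → ℝ // x ≠ 0}

def toR (g : SL2Z) : Matrix (Fin 2) (Fin 2) ℝ := g.1.map (Int.castRingHom ℝ)

lemma toR_mul (g h : SL2Z) : toR (g * h) = toR g * toR h := by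
  show ((g * h : SL2Z) : Matrix (Fin 2) (Fin 2) ℤ).map (Int.castRingHom ℝ) = _
  rw [Matrix.SpecialLinearGroup.coe_mul, Matrix.map_mul]
  rfl

lemma toR_one : toR 1 = 1 := by
  simp [toR]

instance : MulAction SL2Z V where
  smul g x := ⟨toR g *ᵥ x.1, by
    intro hzero
    apply x.2
    have h1 : toR g⁻¹ *ᵥ (toR g *ᵥ x.1) = x.1 := by
      rw [Matrix.mulVec_mulVec, ← toR_mul, inv_mul_cancel, toR_one, Matrix.one_mulVec]
    rw [hzero, Matrix.mulVec_zero] at h1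
    exact h1.symm⟩
  one_smul x := Subtype.ext (by simp [HSMul.hSMul, toR_one, Matrix.one_mulVec])
  mul_smul g h x := Subtype.ext (by
    show toR (g * h) *ᵥ x.1 = toR g *ᵥ (toR h *ᵥ x.1)
    rw [Matrix.mulVec_mulVec, toR_mul])

lemma smul_coe (g : SL2Z) (x : V) : (g • x).1 = toR g *ᵥ x.1 := rfl

def vf (k : ℕ) (x : Fin 2 → ℝ) : ℝ := x 0 + k * x 1
def wf (k : ℕ) (x : Fin 2 → ℝ) : ℝ := x 1 - k * x 0

lemma wf_smul (k : ℕ) (x : Fin 2 → ℝ) : wf k (toR (a k) *ᵥ x) = wf k x := by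
  simp [toR, a, c, vf, wf, Matrix.mulVec, dotProduct, Fin.sum_univ_two]
  ring

lemma vf_smul (k : ℕ) (x : Fin 2 → ℝ) :
    vf k (toR (a k) *ᵥ x) = vf k x + ((c k : ℝ) * (1 + (k:ℝ) ^ 2)) * wf k x := by
  simp [toR, a, c, vf, wf, Matrix.mulVec, dotProduct, Fin.sum_univ_two]
  ring


def sc (k : ℕ) : ℝ := 4 * ((k : ℝ) + 1) ^ 2

lemma sc_pos (k : ℕ) : 0 < sc k := by
  have h : (0:ℝ) ≤ (k:ℝ) := Nat.cast_nonneg k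
  simp only [sc]
  nlinarith

lemma two_sc_le (k : ℕ) : 2 * sc k ≤ (c k : ℝ) * (1 + (k:ℝ) ^ 2) := by
  have hk : (0:ℝ) ≤ (k:ℝ) := Nat.cast_nonneg k
  simp only [sc, c]
  push_cast
  nlinarith [sq_nonneg ((k:ℝ) + 1), sq_nonneg (k:ℝ)]

def X (k : ℕ) : Set V := {x | sc k * (wf k x.1) ^ 2 ≤ vf k x.1 * wf k x.1}
def Y (k : ℕ) : Set V := {x | wf k x.1 ≠ 0 ∧ vf k x.1 * wf k x.1 ≤ -(sc k * (wf k x.1) ^ 2)}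

lemma X_nonempty (k : ℕ) : (X k).Nonempty := by
  refine ⟨⟨![1, k], ?_⟩, ?_⟩
  · intro h
    have := congrFun h 0
    simp at this
  · show sc k * (wf k ![1, (k:ℝ)]) ^ 2 ≤ vf k ![1, (k:ℝ)] * wf k ![1, (k:ℝ)]
    simp [wf]

/-- Membership in `X k ∪ Y k` puts you in the cone around the line `x₀ + k x₁ = 0`... -/
lemma cone_of_mem {k : ℕ} {x : V} (hx : x ∈ X k ∪ Y k) :
    sc k * |wf k x.1| ≤ |vf k x.1| := by
  set v := vf k x.1
  set w := wf k x.1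
  rcases eq_or_ne w 0 with hw | hw
  · rw [hw]
    simp [abs_nonneg]
  · have hw2 : (0:ℝ) < |w| := abs_pos.2 hw
    have key : sc k * |w| * |w| ≤ |v| * |w| := by
      have h1 : sc k * |w| * |w| = sc k * w ^ 2 := by
        rw [mul_assoc, ← abs_mul, ← sq, abs_of_nonneg (sq_nonneg w)]
      rw [h1]
      rcases hx with hx | hx
      · calc sc k * w ^ 2 ≤ v * w := hx
          _ ≤ |v * w| := le_abs_self _
          _ = |v| * |w| := abs_mul _ _
      · calc sc k * w ^ 2 ≤ -(v * w) := by linarith [hx.2]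
          _ ≤ |v * w| := neg_le_abs _
          _ = |v| * |w| := abs_mul _ _
    exact le_of_mul_le_mul_right key hw2

lemma poly_aux {p q M2 : ℝ} (hp1 : 1 ≤ p) (hpq : p + 1 ≤ q) (hM2 : 0 < M2)
    (hfin : 4 * p * q * ((q - p) * M2) ≤ (q ^ 2 + p ^ 2) * M2) : False := by
  set d := q - p with hd
  have hd1 : 1 ≤ d := by rw [hd]; linarith
  have hp2 : 1 ≤ p ^ 2 := by nlinarith
  have t1 : (1:ℝ) ≤ p ^ 2 * (2 * d - 1) := by nlinarith
  have t2 : 0 ≤ d ^ 2 * (2 * p - 1) := mul_nonneg (sq_nonneg d) (by linarith)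
  have t3 : 0 ≤ 2 * p * d * (d - 1) :=
    mul_nonneg (mul_nonneg (by linarith) (by linarith)) (by linarith)
  have key : q ^ 2 + p ^ 2 < 4 * p * q * d := by
    have e : 4 * p * q * d - (q ^ 2 + p ^ 2) =
        2 * p ^ 2 * (2 * d - 1) + d ^ 2 * (2 * p - 1) + 2 * p * d * (d - 1) := by
      rw [hd]; ring
    linarith
  have := mul_lt_mul_of_pos_right key hM2
  linarith

set_option maxHeartbeats 1000000 in
lemma cones_disjoint_core {i j : ℕ} (hij : i < j) (x : Fin 2 → ℝ) (hx : x ≠ 0)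
    (hi : sc i * |wf i x| ≤ |vf i x|) (hj : sc j * |wf j x| ≤ |vf j x|) : False := by
  set M : ℝ := max |x 0| |x 1| with hM
  have hM0 : 0 < M := by
    rcases Function.ne_iff.1 hx with ⟨t, ht⟩
    have h1 : 0 < |x t| := abs_pos.2 ht
    fin_cases t
    · exact lt_of_lt_of_le h1 (le_max_left _ _)
    · exact lt_of_lt_of_le h1 (le_max_right _ _)
  have hx0 : |x 0| ≤ M := le_max_left _ _
  have hx1 : |x 1| ≤ M := le_max_right _ _
  have hMsq : M ^ 2 ≤ x 0 ^ 2 + x 1 ^ 2 := by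
    rcases max_cases |x 0| |x 1| with ⟨h1, _⟩ | ⟨h1, _⟩ <;>
      · rw [hM, h1, sq_abs]
        nlinarith [sq_nonneg (x 0), sq_nonneg (x 1)]
  clear_value M
  set I : ℝ := (i : ℝ) with hIdef
  set J : ℝ := (j : ℝ) with hJdef
  have hI0 : (0:ℝ) ≤ I := Nat.cast_nonneg i
  clear_value I J
  have hIJ : I + 1 ≤ J := by
    have h2 : i + 1 ≤ j := hij
    rw [hIdef, hJdef]
    exact_mod_cast h2
  have hJ1 : (0:ℝ) < J + 1 := by linarith
  have hI1 : (0:ℝ) < I + 1 := by linarith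
  have hvi : |vf i x| ≤ (I + 1) * M := by
    calc |vf i x| = |x 0 + I * x 1| := by rw [vf, hIdef]
      _ ≤ |x 0| + |I * x 1| := abs_add_le _ _
      _ = |x 0| + I * |x 1| := by rw [abs_mul, abs_of_nonneg hI0]
      _ ≤ M + I * M := by nlinarith
      _ = (I + 1) * M := by ring
  have hvj : |vf j x| ≤ (J + 1) * M := by
    calc |vf j x| = |x 0 + J * x 1| := by rw [vf, hJdef]
      _ ≤ |x 0| + |J * x 1| := abs_add_le _ _
      _ = |x 0| + J * |x 1| := by rw [abs_mul, abs_of_nonneg (by linarith : (0:ℝ) ≤ J)]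
      _ ≤ M + J * M := by nlinarith
      _ = (J + 1) * M := by ring
  set A := |vf j x| * |wf i x| with hA
  set B := |vf i x| * |wf j x| with hB
  have hA0 : 0 ≤ A := mul_nonneg (abs_nonneg _) (abs_nonneg _)
  have hB0 : 0 ≤ B := mul_nonneg (abs_nonneg _) (abs_nonneg _)
  clear_value A B
  -- the determinant identity
  have hdet : vf j x * wf i x - vf i x * wf j x = (J - I) * (x 0 ^ 2 + x 1 ^ 2) := by
    simp only [vf, wf, ← hIdef, ← hJdef]
    ring
  have hdM : (J - I) * M ^ 2 ≤ A + B := by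
    have h1 : (J - I) * (x 0 ^ 2 + x 1 ^ 2) ≤ A + B := by
      calc (J - I) * (x 0 ^ 2 + x 1 ^ 2) = vf j x * wf i x - vf i x * wf j x := hdet.symm
        _ ≤ |vf j x * wf i x - vf i x * wf j x| := le_abs_self _
        _ ≤ |vf j x * wf i x| + |vf i x * wf j x| := abs_sub _ _
        _ = A + B := by rw [hA, hB, abs_mul, abs_mul]
    nlinarith [hMsq]
  -- cone bounds: sc k = 4 (k+1)^2
  have hsci : sc i = 4 * (I + 1) ^ 2 := by rw [sc, hIdef]
  have hscj : sc j = 4 * (J + 1) ^ 2 := by rw [sc, hJdef]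
  have hwi : 4 * (I + 1) * |wf i x| ≤ M := by
    have h1 : 4 * (I + 1) ^ 2 * |wf i x| ≤ (I + 1) * M := by
      rw [← hsci]; exact hi.trans hvi
    nlinarith [abs_nonneg (wf i x)]
  have hwj : 4 * (J + 1) * |wf j x| ≤ M := by
    have h1 : 4 * (J + 1) ^ 2 * |wf j x| ≤ (J + 1) * M := by
      rw [← hscj]; exact hj.trans hvj
    nlinarith [abs_nonneg (wf j x)]
  have ha : 4 * (I + 1) * A ≤ (J + 1) * M ^ 2 := by
    have := mul_le_mul hvj hwi (by positivity) (by nlinarith)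
    nlinarith [this]
  have hb : 4 * (J + 1) * B ≤ (I + 1) * M ^ 2 := by
    have := mul_le_mul hvi hwj (by positivity) (by nlinarith)
    nlinarith [this]
  have ha' : 4 * (I + 1) * (J + 1) * A ≤ (J + 1) ^ 2 * M ^ 2 := by
    have := mul_le_mul_of_nonneg_left ha hJ1.le
    nlinarith [this]
  have hb' : 4 * (I + 1) * (J + 1) * B ≤ (I + 1) ^ 2 * M ^ 2 := by
    have := mul_le_mul_of_nonneg_left hb hI1.le
    nlinarith [this]
  have hc' : 4 * (I + 1) * (J + 1) * ((J - I) * M ^ 2) ≤ 4 * (I + 1) * (J + 1) * (A + B) := by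
    apply mul_le_mul_of_nonneg_left hdM
    positivity
  have hfin : 4 * (I + 1) * (J + 1) * (((J + 1) - (I + 1)) * M ^ 2) ≤
      ((J + 1) ^ 2 + (I + 1) ^ 2) * M ^ 2 := by
    have e : (J + 1) - (I + 1) = J - I := by ring
    rw [e]
    linarith [ha', hb', hc']
  exact poly_aux (by linarith) (by linarith) (pow_pos hM0 2) hfin

lemma pairwise_cones : ∀ {i j : ℕ}, i ≠ j → ∀ (x : V), x ∈ X i ∪ Y i → x ∈ X j ∪ Y j → False := by
  intro i j hij x hxi hxj
  rcases lt_or_gt_of_ne hij with h | h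
  · exact cones_disjoint_core h x.1 x.2 (cone_of_mem hxi) (cone_of_mem hxj)
  · exact cones_disjoint_core h x.1 x.2 (cone_of_mem hxj) (cone_of_mem hxi)

lemma hX : ∀ i, a i • (Y i)ᶜ ⊆ X i := by
  intro k _z hz
  rw [Set.mem_smul_set] at hz
  obtain ⟨x, hx, rfl⟩ := hz
  show sc k * (wf k ((a k • x).1)) ^ 2 ≤ vf k ((a k • x).1) * wf k ((a k • x).1)
  rw [smul_coe, wf_smul, vf_smul]
  set v := vf k x.1
  set w := wf k x.1
  set T := (c k : ℝ) * (1 + (k:ℝ) ^ 2) with hT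
  have h2s := two_sc_le k
  rcases eq_or_ne w 0 with hw | hw
  · simp [hw]
  · have hy : ¬(v * w ≤ -(sc k * w ^ 2)) := fun hc => hx ⟨hw, hc⟩
    push_neg at hy
    have hw2 : 0 < w ^ 2 := by
      have := abs_pos.2 hw
      nlinarith [sq_abs w]
    nlinarith

lemma hY : ∀ i, (a i)⁻¹ • (X i)ᶜ ⊆ Y i := by
  intro k _z hz
  rw [Set.mem_smul_set] at hz
  obtain ⟨x, hx, rfl⟩ := hz
  set y := (a k)⁻¹ • x with hy
  have hxy : a k • y = x := smul_inv_smul _ _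
  have hw : wf k x.1 = wf k y.1 := by rw [← hxy, smul_coe, wf_smul]
  have hv : vf k x.1 = vf k y.1 + ((c k : ℝ) * (1 + (k:ℝ) ^ 2)) * wf k y.1 := by
    rw [← hxy, smul_coe, vf_smul]
  have hnx : ¬(sc k * (wf k x.1) ^ 2 ≤ vf k x.1 * wf k x.1) := hx
  rw [hw, hv] at hnx
  push_neg at hnx
  set v := vf k y.1
  set w := wf k y.1
  set T := (c k : ℝ) * (1 + (k:ℝ) ^ 2) with hT
  have h2s := two_sc_le k
  have hwne : w ≠ 0 := by
    intro h0
    rw [h0] at hnx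
    simp at hnx
  refine ⟨hwne, ?_⟩
  have hw2 : 0 < w ^ 2 := by
    have := abs_pos.2 hwne
    nlinarith [sq_abs w]
  nlinarith

lemma lift_a_injective : Function.Injective (FreeGroup.lift a) := by
  apply FreeGroup.injective_lift_of_ping_pong a X Y X_nonempty
  · intro i j hij
    rw [Function.onFun, Set.disjoint_left]
    intro x hxi hxj
    exact pairwise_cones hij x (Or.inl hxi) (Or.inl hxj)
  · intro i j hij
    rw [Function.onFun, Set.disjoint_left]
    intro x hxi hxj
    exact pairwise_cones hij x (Or.inr hxi) (Or.inr hxj)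
  · intro i j
    rw [Set.disjoint_left]
    intro x hxi hxj
    rcases eq_or_ne i j with rfl | hij
    · have h1 : sc i * (wf i x.1) ^ 2 ≤ vf i x.1 * wf i x.1 := hxi
      have h2 := hxj.2
      have h3 : (0:ℝ) < wf i x.1 ^ 2 := by
        have := abs_pos.2 hxj.1
        nlinarith [sq_abs (wf i x.1)]
      have := sc_pos i
      nlinarith
    · exact pairwise_cones hij x (Or.inl hxi) (Or.inr hxj)
  · exact hX
  · intro i
    show (a i)⁻¹ • (X i)ᶜ ⊆ Y i
    exact hY i


instance freeGroup_countable {α : Type*} [Countable α] : Countable (FreeGroup α) :=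
  inferInstanceAs (Countable (Quot _))

lemma exists_letters {α : Type*} (w : FreeGroup α) :
    ∃ L : Finset α, w ∈ Subgroup.closure (FreeGroup.of '' (L : Set α)) := by
  classical
  refine FreeGroup.induction_on w ⟨∅, Subgroup.one_mem _⟩ ?_ ?_ ?_
  · intro x
    exact ⟨{x}, Subgroup.subset_closure ⟨x, by simp, rfl⟩⟩
  · rintro x ⟨L, hL⟩
    exact ⟨L, Subgroup.inv_mem _ hL⟩
  · rintro x y ⟨L1, h1⟩ ⟨L2, h2⟩
    refine ⟨L1 ∪ L2, Subgroup.mul_mem _ ?_ ?_⟩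
    · exact Subgroup.closure_mono (Set.image_mono (by intro t ht; simp [ht])) h1
    · exact Subgroup.closure_mono (Set.image_mono (by intro t ht; simp [ht])) h2

lemma freegroup_sep {α : Type} (s : Finset (FreeGroup α)) (hs : ∀ w ∈ s, w ≠ 1) :
    ∃ ψ : FreeGroup α →* SL2Z, ∀ w ∈ s, ψ w ≠ 1 := by
  classical
  have hL : ∃ L : Finset α, ∀ w ∈ s, w ∈ Subgroup.closure (FreeGroup.of '' (L : Set α)) := by
    refine ⟨s.sup fun w => (exists_letters w).choose, fun w hw => ?_⟩
    refine Subgroup.closure_mono (Set.image_mono ?_) (exists_letters w).choose_spec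
    intro t ht
    exact Finset.le_sup (f := fun w => (exists_letters w).choose) hw ht
  obtain ⟨L, hLmem⟩ := hL
  set e := L.equivFin with he
  set f : α → FreeGroup ℕ :=
    fun x => if h : x ∈ L then FreeGroup.of (e ⟨x, h⟩ : ℕ) else 1 with hf
  set m : FreeGroup α →* FreeGroup ℕ := FreeGroup.lift f with hm
  set f' : ℕ → FreeGroup α :=
    fun n => if h : n < L.card then FreeGroup.of ((e.symm ⟨n, h⟩ : {x // x ∈ L}) : α) else 1
    with hf'
  set m' : FreeGroup ℕ →* FreeGroup α := FreeGroup.lift f' with hm'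
  have hret : ∀ w ∈ Subgroup.closure (FreeGroup.of '' (L : Set α)), m' (m w) = w := by
    intro w hw
    refine Subgroup.closure_induction ?_ ?_ ?_ ?_ hw
    · rintro _ ⟨x, hx, rfl⟩
      have hxL : x ∈ L := hx
      rw [hm, FreeGroup.lift_apply_of, hf]
      simp only [hxL, dif_pos]
      rw [hm', FreeGroup.lift_apply_of, hf']
      simp only [Fin.is_lt, dif_pos, Fin.eta, Equiv.symm_apply_apply]
    · simp
    · intro x y _ _ hx' hy'
      rw [_root_.map_mul, _root_.map_mul, hx', hy']
    · intro x _ hx'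
      rw [_root_.map_inv, _root_.map_inv, hx']
  refine ⟨(FreeGroup.lift a).comp m, ?_⟩
  intro w hw hcontra
  apply hs w hw
  have h1 : FreeGroup.lift a (m w) = FreeGroup.lift a 1 := by
    rw [_root_.map_one]
    exact hcontra
  have h2 : m w = 1 := lift_a_injective h1
  have h3 := hret w (hLmem w hw)
  rw [h2, _root_.map_one] at h3
  exact h3.symm

lemma countable_of_fg {G : Type*} [Group G] (hfg : Group.FG G) : Countable G := by
  obtain ⟨S, hS⟩ := hfg.out
  let q : FreeGroup {x // x ∈ S} →* G := FreeGroup.lift fun x => (x : G)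
  have hq : Function.Surjective q := by
    rw [← MonoidHom.range_eq_top, FreeGroup.range_lift_eq_closure]
    rw [← hS]
    congr 1
    ext g
    constructor
    · rintro ⟨x, rfl⟩
      exact x.2
    · intro hg
      exact ⟨⟨g, hg⟩, rfl⟩
  exact hq.countable

/-- The germ homomorphism from sequences in `SL₂(ℤ)` to `SL₂` of the germ ring. -/
def germMap (u : Ultrafilter ℕ) :
    (ℕ → SL2Z) →* Matrix.SpecialLinearGroup (Fin 2) ((u : Filter ℕ).Germ ℤ) where
  toFun F := ⟨Matrix.of fun i j =>
      ((fun n => ((F n : Matrix (Fin 2) (Fin 2) ℤ) i j) : ℕ → ℤ) : (u : Filter ℕ).Germ ℤ), by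
    rw [Matrix.det_fin_two]
    simp only [Matrix.of_apply]
    rw [← Filter.Germ.coe_mul, ← Filter.Germ.coe_mul, ← Filter.Germ.coe_sub]
    have h1 : ((fun n => ((F n : Matrix (Fin 2) (Fin 2) ℤ) 0 0)) *
        (fun n => ((F n : Matrix (Fin 2) (Fin 2) ℤ) 1 1)) -
        (fun n => ((F n : Matrix (Fin 2) (Fin 2) ℤ) 0 1)) *
        (fun n => ((F n : Matrix (Fin 2) (Fin 2) ℤ) 1 0)) : ℕ → ℤ) = 1 := by
      funext n
      have h2 := (F n).2
      rw [Matrix.det_fin_two] at h2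
      simpa using h2
    rw [h1, Filter.Germ.coe_one]⟩
  map_one' := by
    apply Subtype.ext
    show (Matrix.of fun i j => _) = _
    funext i j
    simp only [Matrix.of_apply, Pi.one_apply, Matrix.SpecialLinearGroup.coe_one]
    fin_cases i <;> fin_cases j <;>
      simp [Matrix.one_apply, ← Filter.Germ.coe_one, ← Filter.Germ.coe_zero] <;>
      exact Filter.EventuallyEq.rfl
  map_mul' F F' := by
    apply Subtype.ext
    show (Matrix.of fun i j => _) = _
    funext i j
    erw [Matrix.SpecialLinearGroup.coe_mul, Matrix.mul_apply, Fin.sum_univ_two]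
    simp only [Matrix.of_apply, Pi.mul_apply, Matrix.SpecialLinearGroup.coe_mul,
      Matrix.mul_apply, Fin.sum_univ_two]
    rw [← Filter.Germ.coe_mul, ← Filter.Germ.coe_mul, ← Filter.Germ.coe_add]
    rfl

end FRFaux


/-- Every finitely generated fully residually free group is linear: it embeds into
`SL₂(ℤ^ℕ/u)` for some ultrafilter `u` on `ℕ`, where `ℤ^ℕ/u` is the ultrapower of the ring
`ℤ` along `u` (realized as the ring of germs of functions `ℕ → ℤ` along `u`). -/
theorem fullyResiduallyFree_linear {G : Type*} [Group G]
    (hfg : Group.FG G) (h : IsFullyResiduallyFree G) :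
    ∃ (u : Ultrafilter ℕ)
      (φ : G →* Matrix.SpecialLinearGroup (Fin 2) ((u : Filter ℕ).Germ ℤ)),
      Function.Injective φ := by
  classical
  have hcount : Countable G := FRFaux.countable_of_fg hfg
  obtain ⟨e, he⟩ := exists_surjective_nat G
  have hstep : ∀ n : ℕ, ∃ ψ : G →* FRFaux.SL2Z, ∀ i ≤ n, e i ≠ 1 → ψ (e i) ≠ 1 := by
    intro n
    set s : Finset G := ((Finset.range (n+1)).image e).filter (fun g => g ≠ 1) with hsdef
    have hs1 : ∀ g ∈ s, g ≠ 1 := fun g hg => (Finset.mem_filter.1 hg).2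
    obtain ⟨α, φ0, hφ0⟩ := h s hs1
    obtain ⟨ψ0, hψ0⟩ := FRFaux.freegroup_sep (s.image φ0) (by
      intro w hw
      obtain ⟨g, hg, rfl⟩ := Finset.mem_image.1 hw
      exact hφ0 g hg)
    refine ⟨ψ0.comp φ0, ?_⟩
    intro i hi hne
    have hgs : e i ∈ s := Finset.mem_filter.2
      ⟨Finset.mem_image.2 ⟨i, Finset.mem_range.2 (Nat.lt_succ_of_le hi), rfl⟩, hne⟩
    exact hψ0 (φ0 (e i)) (Finset.mem_image_of_mem φ0 hgs)
  choose ψ hψ using hstep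
  set u : Ultrafilter ℕ := Ultrafilter.of Filter.atTop with hu
  refine ⟨u, (FRFaux.germMap u).comp (Pi.monoidHom fun n => ψ n), ?_⟩
  rw [injective_iff_map_eq_one]
  intro g hg
  by_contra hg1
  obtain ⟨i, rfl⟩ := he g
  have hg' : FRFaux.germMap u (fun n => ψ n (e i)) = 1 := hg
  have hmat := congrArg Subtype.val hg'
  have hent : ∀ r c : Fin 2, (fun n => ((ψ n (e i) : Matrix (Fin 2) (Fin 2) ℤ) r c)) =ᶠ[↑u]
      (fun n => ((1 : Matrix (Fin 2) (Fin 2) ℤ) r c)) := by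
    intro r c
    have h1 := congrFun (congrFun hmat r) c
    have h2 : ((FRFaux.germMap u (fun n => ψ n (e i))) : Matrix (Fin 2) (Fin 2) _) r c =
        ((fun n => ((ψ n (e i) : Matrix (Fin 2) (Fin 2) ℤ) r c) : ℕ → ℤ) :
          (u : Filter ℕ).Germ ℤ) := rfl
    have h3 : ((1 : Matrix.SpecialLinearGroup (Fin 2) ((u : Filter ℕ).Germ ℤ)) :
        Matrix (Fin 2) (Fin 2) _) r c =
        ((fun n => ((1 : Matrix (Fin 2) (Fin 2) ℤ) r c) : ℕ → ℤ) : (u : Filter ℕ).Germ ℤ) := by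
      rw [Matrix.SpecialLinearGroup.coe_one]
      fin_cases r <;> fin_cases c <;>
        simp [Matrix.one_apply, ← Filter.Germ.coe_one, ← Filter.Germ.coe_zero] <;>
        exact Filter.EventuallyEq.rfl
    rw [h2, h3] at h1
    exact Filter.Germ.coe_eq.1 h1
  have hev : ∀ᶠ n in (u : Filter ℕ), ψ n (e i) = 1 := by
    refine ((hent 0 0).and ((hent 0 1).and ((hent 1 0).and (hent 1 1)))).mono ?_
    rintro n ⟨e00, e01, e10, e11⟩
    apply Matrix.SpecialLinearGroup.ext
    intro r c
    rw [Matrix.SpecialLinearGroup.coe_one]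
    fin_cases r <;> fin_cases c
    · exact e00
    · exact e01
    · exact e10
    · exact e11
  have hge : ∀ᶠ n in (u : Filter ℕ), i ≤ n := by
    rw [hu]
    exact Ultrafilter.of_le Filter.atTop (Filter.mem_atTop i)
  obtain ⟨n, hn1, hn2⟩ := (hev.and hge).exists
  exact hψ n i hn2 hg1 hn1
end

section
/- Let G be a CSA group and let a, b ∈ G be two non-commuting elements. Then for all w, u ∈ G: (w = 1 or u = 1) holds if and only if [w, u] = 1, [w, a⁻¹ua] = 1, and [w, b⁻¹ub] = 1. In particular, in a non-abelian CSA group a disjunction of two equations is equivalent to a conjunction of three equations. -/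
/-- A subgroup `M` of `G` is maximal abelian if it is abelian and is not properly contained
in any abelian subgroup of `G`. -/
def IsMaxAbelian {G : Type*} [Group G] (M : Subgroup G) : Prop :=
  (∀ a ∈ M, ∀ b ∈ M, a * b = b * a) ∧
    ∀ N : Subgroup G, (∀ a ∈ N, ∀ b ∈ N, a * b = b * a) → M ≤ N → N = M

/-- A group is CSA if every maximal abelian subgroup `M` is malnormal:
`g⁻¹ M g ∩ M = {1}` for every `g ∉ M`. -/
def IsCSA (G : Type*) [Group G] : Prop :=
  ∀ M : Subgroup G, IsMaxAbelian M →
    ∀ g ∉ M, ∀ m ∈ M, g⁻¹ * m * g ∈ M → m = 1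

/-- The closure of a pairwise commuting set is abelian. -/
lemma closure_comm {G : Type*} [Group G] (S : Set G)
    (hS : ∀ x ∈ S, ∀ y ∈ S, x * y = y * x) :
    ∀ a ∈ Subgroup.closure S, ∀ b ∈ Subgroup.closure S, a * b = b * a := by
  have h1 : Subgroup.closure S ≤ Subgroup.centralizer S :=
    (Subgroup.closure_le _).2 fun x hx => Subgroup.mem_centralizer_iff.2 fun y hy => hS y hy x hx
  have h2 : Subgroup.closure S ≤ Subgroup.centralizer (Subgroup.closure S : Set G) :=
    (Subgroup.closure_le _).2 fun x hx => Subgroup.mem_centralizer_iff.2 fun y hy =>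
      ((Subgroup.mem_centralizer_iff.1 (h1 hy)) x hx).symm
  intro p hp q hq
  exact Subgroup.mem_centralizer_iff.1 (h2 hq) p hp

/-- Every abelian subgroup is contained in a maximal abelian subgroup. -/
lemma exists_maxAbelian {G : Type*} [Group G] (H : Subgroup G)
    (hH : ∀ a ∈ H, ∀ b ∈ H, a * b = b * a) :
    ∃ M : Subgroup G, IsMaxAbelian M ∧ H ≤ M := by
  obtain ⟨M, hHM, hMs, hMmax⟩ := zorn_le_nonempty₀
    {N : Subgroup G | ∀ a ∈ N, ∀ b ∈ N, a * b = b * a}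
    (fun c hc hchain y hy => by
      refine ⟨sSup c, ?_, fun z hz => le_sSup hz⟩
      intro p hp q hq
      have hd : DirectedOn (· ≤ ·) c := hchain.directedOn
      obtain ⟨P, hPc, hpP⟩ := (Subgroup.mem_sSup_of_directedOn ⟨y, hy⟩ hd).1 hp
      obtain ⟨Q, hQc, hqQ⟩ := (Subgroup.mem_sSup_of_directedOn ⟨y, hy⟩ hd).1 hq
      rcases hd P hPc Q hQc with ⟨R, hRc, hPR, hQR⟩
      exact hc hRc p (hPR hpP) q (hQR hqQ)) H hH
  exact ⟨M, ⟨hMs, fun N hN hMN => le_antisymm (hMmax hN hMN) hMN⟩, hHM⟩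

/-- An element commuting with everything in a maximal abelian subgroup belongs to it. -/
lemma mem_max_of_comm {G : Type*} [Group G] {M : Subgroup G} (hM : IsMaxAbelian M)
    (t : G) (h : ∀ m ∈ M, m * t = t * m) : t ∈ M := by
  have hS : ∀ p ∈ (↑M ∪ {t} : Set G), ∀ q ∈ (↑M ∪ {t} : Set G), p * q = q * p := by
    rintro p (hp | rfl) q (hq | rfl)
    · exact hM.1 p hp q hq
    · exact h p hp
    · exact (h q hq).symm
    · rfl
  have heq := hM.2 (Subgroup.closure (↑M ∪ {t})) (closure_comm _ hS)
    (fun x hx => Subgroup.subset_closure (Or.inl hx))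
  rw [← heq]
  exact Subgroup.subset_closure (Or.inr rfl)

/-- CSA groups have transitive commutation on nontrivial elements. -/
lemma csa_ct {G : Type*} [Group G] (hG : IsCSA G) {x y z : G} (hx : x ≠ 1)
    (hxy : x * y = y * x) (hxz : x * z = z * x) : y * z = z * y := by
  have hS : ∀ p ∈ ({x, y} : Set G), ∀ q ∈ ({x, y} : Set G), p * q = q * p := by
    rintro p (rfl | rfl) q (rfl | rfl)
    · rfl
    · exact hxy
    · exact hxy.symm
    · rfl
  obtain ⟨M, hM, hle⟩ := exists_maxAbelian (Subgroup.closure {x, y}) (closure_comm _ hS)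
  have hxM : x ∈ M := hle (Subgroup.subset_closure (by simp))
  have hyM : y ∈ M := hle (Subgroup.subset_closure (by simp))
  by_cases hzM : z ∈ M
  · exact hM.1 y hyM z hzM
  · exfalso
    apply hx
    apply hG M hM z hzM x hxM
    have hcon : z⁻¹ * x * z = x := by
      rw [mul_assoc, hxz, ← mul_assoc, inv_mul_cancel, one_mul]
    rw [hcon]; exact hxM

lemma comm_of_commutator_eq_one {G : Type*} [Group G] {x y : G}
    (h : x⁻¹ * y⁻¹ * x * y = 1) : x * y = y * x := by
  rw [mul_assoc] at h
  have h2 := inv_eq_of_mul_eq_one_right h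
  rw [mul_inv_rev, inv_inv, inv_inv] at h2
  exact h2.symm

/-- In a CSA group, for any two non-commuting elements `a, b`, the disjunction
`w = 1 ∨ u = 1` is equivalent to the conjunction of the three equations
`[w, u] = 1`, `[w, a⁻¹ u a] = 1` and `[w, b⁻¹ u b] = 1` (where `[x, y] = x⁻¹y⁻¹xy`). -/
theorem csa_disjunction_iff_equations {G : Type*} [Group G] (hG : IsCSA G)
    (a b : G) (hab : a * b ≠ b * a) (w u : G) :
    (w = 1 ∨ u = 1) ↔
      (w⁻¹ * u⁻¹ * w * u = 1 ∧
        w⁻¹ * (a⁻¹ * u * a)⁻¹ * w * (a⁻¹ * u * a) = 1 ∧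
        w⁻¹ * (b⁻¹ * u * b)⁻¹ * w * (b⁻¹ * u * b) = 1) := by
  constructor
  · rintro (rfl | rfl) <;> exact ⟨by group, by group, by group⟩
  · rintro ⟨h1, h2, h3⟩
    by_contra hcon
    push_neg at hcon
    obtain ⟨hw, hu⟩ := hcon
    have hwu : w * u = u * w := comm_of_commutator_eq_one h1
    have hwa : w * (a⁻¹ * u * a) = (a⁻¹ * u * a) * w := comm_of_commutator_eq_one h2
    have hwb : w * (b⁻¹ * u * b) = (b⁻¹ * u * b) * w := comm_of_commutator_eq_one h3
    have hua : u * (a⁻¹ * u * a) = (a⁻¹ * u * a) * u := csa_ct hG hw hwu hwa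
    have hub : u * (b⁻¹ * u * b) = (b⁻¹ * u * b) * u := csa_ct hG hw hwu hwb
    have hSu : ∀ p ∈ ({u} : Set G), ∀ q ∈ ({u} : Set G), p * q = q * p := by
      rintro p rfl q rfl; rfl
    obtain ⟨M, hM, hle⟩ := exists_maxAbelian (Subgroup.closure {u}) (closure_comm _ hSu)
    have huM : u ∈ M := hle (Subgroup.subset_closure rfl)
    have haM : a⁻¹ * u * a ∈ M :=
      mem_max_of_comm hM _ (fun m hm => csa_ct hG hu (hM.1 u huM m hm) hua)
    have hbM : b⁻¹ * u * b ∈ M :=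
      mem_max_of_comm hM _ (fun m hm => csa_ct hG hu (hM.1 u huM m hm) hub)
    have ha : a ∈ M := by
      by_contra ha
      exact hu (hG M hM a ha u huM haM)
    have hb : b ∈ M := by
      by_contra hb
      exact hu (hG M hM b hb u huM hbM)
    exact hab (hM.1 a ha b hb)
end

section
/- Every finitely generated residually free group G embeds into a direct product of finitely many fully residually free groups: there exist finitely many fully residually free groups G₁, …, Gₙ and an injective group homomorphism from G into G₁ × ⋯ × Gₙ. -/
/-- A group `G` is *residually free* if for every nontrivial element of `G` there is a
homomorphism from `G` to a free group sending it to a nontrivial element. -/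
def IsResiduallyFree (G : Type*) [Group G] : Prop :=
  ∀ g : G, g ≠ 1 → ∃ (α : Type) (φ : G →* FreeGroup α), φ g ≠ 1

/-- A bundled fully residually free group. -/
structure FRFGroup where
  carrier : Type
  [group : Group carrier]
  frf : IsFullyResiduallyFree carrier

attribute [instance] FRFGroup.group

open scoped Pointwise

noncomputable section

namespace BMRZ

abbrev Mat := Matrix (Fin 2) (Fin 2) ℚ
abbrev GL2 := Matˣ

/-- nonzero vectors of `ℚ²` -/
abbrev V2 := {v : Fin 2 → ℚ // v ≠ 0}

def A : GL2 := ⟨!![16, 0; 0, 1], !![16⁻¹, 0; 0, 1], by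
  ext i j; fin_cases i <;> fin_cases j <;>
    simp [Matrix.mul_apply, Fin.sum_univ_two], by
  ext i j; fin_cases i <;> fin_cases j <;>
    simp [Matrix.mul_apply, Fin.sum_univ_two]⟩

def B : GL2 := ⟨!![17, 15; 15, 17], !![17/64, -15/64; -15/64, 17/64], by
  ext i j; fin_cases i <;> fin_cases j <;>
    simp [Matrix.mul_apply, Fin.sum_univ_two] <;> norm_num, by
  ext i j; fin_cases i <;> fin_cases j <;>
    simp [Matrix.mul_apply, Fin.sum_univ_two] <;> norm_num⟩

instance : SMul GL2 V2 where
  smul g v := ⟨(g : Mat).mulVec v, by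
    intro h
    have h2 : ((g⁻¹ : GL2) : Mat).mulVec ((g : Mat).mulVec v) = 0 := by
      rw [h]; simp
    rw [Matrix.mulVec_mulVec] at h2
    have h3 : ((g⁻¹ : GL2) : Mat) * (g : Mat) = 1 := by
      rw [← Units.val_mul, inv_mul_cancel]; rfl
    rw [h3, Matrix.one_mulVec] at h2
    exact v.2 h2⟩

@[simp] lemma smul_coe (g : GL2) (v : V2) :
    ((g • v : V2) : Fin 2 → ℚ) = (g : Mat).mulVec v := rfl

instance : MulAction GL2 V2 where
  one_smul v := Subtype.ext (by simp)
  mul_smul g h v := Subtype.ext (by simp only [smul_coe, Units.val_mul, Matrix.mulVec_mulVec])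

def Xa : Set V2 := {v | 3 * |v.1 1| < |v.1 0|}
def Ya : Set V2 := {v | 3 * |v.1 0| < |v.1 1|}
def Xb : Set V2 := {v | 3 * |v.1 1 - v.1 0| < |v.1 0 + v.1 1|}
def Yb : Set V2 := {v | 3 * |v.1 0 + v.1 1| < |v.1 1 - v.1 0|}

lemma A_smul0 (v : V2) : ((A • v).1) 0 = 16 * v.1 0 := by
  show ((A : Mat).mulVec v.1) 0 = _
  simp [A, Matrix.mulVec, dotProduct, Fin.sum_univ_two, Matrix.vecHead, Matrix.vecTail]

lemma A_smul1 (v : V2) : ((A • v).1) 1 = v.1 1 := by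
  show ((A : Mat).mulVec v.1) 1 = _
  simp [A, Matrix.mulVec, dotProduct, Fin.sum_univ_two, Matrix.vecHead, Matrix.vecTail]

lemma Ainv_coe : ((A⁻¹ : GL2) : Mat) = !![16⁻¹, 0; 0, 1] := rfl

lemma Ainv_smul0 (v : V2) : ((A⁻¹ • v).1) 0 = v.1 0 / 16 := by
  show ((A⁻¹ : GL2) : Mat).mulVec v.1 0 = _
  rw [Ainv_coe]
  simp [Matrix.mulVec, dotProduct, Fin.sum_univ_two, Matrix.vecHead, Matrix.vecTail]
  ring

lemma Ainv_smul1 (v : V2) : ((A⁻¹ • v).1) 1 = v.1 1 := by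
  show ((A⁻¹ : GL2) : Mat).mulVec v.1 1 = _
  rw [Ainv_coe]
  simp [Matrix.mulVec, dotProduct, Fin.sum_univ_two, Matrix.vecHead, Matrix.vecTail]

lemma B_smul0 (v : V2) : ((B • v).1) 0 = 17 * v.1 0 + 15 * v.1 1 := by
  show ((B : Mat).mulVec v.1) 0 = _
  simp [B, Matrix.mulVec, dotProduct, Fin.sum_univ_two, Matrix.vecHead, Matrix.vecTail]

lemma B_smul1 (v : V2) : ((B • v).1) 1 = 15 * v.1 0 + 17 * v.1 1 := by
  show ((B : Mat).mulVec v.1) 1 = _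
  simp [B, Matrix.mulVec, dotProduct, Fin.sum_univ_two, Matrix.vecHead, Matrix.vecTail]

lemma Binv_coe : ((B⁻¹ : GL2) : Mat) = !![17/64, -15/64; -15/64, 17/64] := rfl

lemma Binv_smul0 (v : V2) : ((B⁻¹ • v).1) 0 = (17 * v.1 0 - 15 * v.1 1) / 64 := by
  show ((B⁻¹ : GL2) : Mat).mulVec v.1 0 = _
  rw [Binv_coe]
  simp [Matrix.mulVec, dotProduct, Fin.sum_univ_two, Matrix.vecHead, Matrix.vecTail]
  ring

lemma Binv_smul1 (v : V2) : ((B⁻¹ • v).1) 1 = (17 * v.1 1 - 15 * v.1 0) / 64 := by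
  show ((B⁻¹ : GL2) : Mat).mulVec v.1 1 = _
  rw [Binv_coe]
  simp [Matrix.mulVec, dotProduct, Fin.sum_univ_two, Matrix.vecHead, Matrix.vecTail]
  ring

lemma vne (v : V2) : v.1 0 ≠ 0 ∨ v.1 1 ≠ 0 := by
  by_contra hc
  push_neg at hc
  exact v.2 (funext fun i => by fin_cases i <;> simp [hc.1, hc.2])


lemma abs_pos_of {x y : ℚ} (h : |y| ≤ 3 * |x|) (hne : ¬ (x = 0 ∧ y = 0)) : 0 < |x| := by
  rcases eq_or_ne x 0 with h0 | h0
  · exfalso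
    rw [h0] at h
    simp only [abs_zero, mul_zero] at h
    exact hne ⟨h0, abs_eq_zero.mp (le_antisymm h (abs_nonneg _))⟩
  · exact abs_pos.mpr h0

lemma habs16 : |(16:ℚ)| = 16 := abs_of_pos (by norm_num)
lemma habs32 : |(32:ℚ)| = 32 := abs_of_pos (by norm_num)
lemma habs64 : |(64:ℚ)| = 64 := abs_of_pos (by norm_num)
lemma habs2 : |(2:ℚ)| = 2 := abs_of_pos (by norm_num)

lemma hXa : A • Yaᶜ ⊆ Xa := by
  rintro w ⟨v, hv, rfl⟩
  simp only [Ya, Set.mem_compl_iff, Set.mem_setOf_eq, not_lt] at hv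
  have hx : 0 < |v.1 0| := abs_pos_of hv (by
    rintro ⟨h1, h0⟩; rcases vne v with h | h <;> [exact h h1; exact h h0])
  simp only [Xa, Set.mem_setOf_eq]
  rw [A_smul0, A_smul1, abs_mul, habs16]
  linarith

lemma hYa : A⁻¹ • Xaᶜ ⊆ Ya := by
  rintro w ⟨v, hv, rfl⟩
  simp only [Xa, Set.mem_compl_iff, Set.mem_setOf_eq, not_lt] at hv
  have hy : 0 < |v.1 1| := abs_pos_of hv (by
    rintro ⟨h1, h0⟩; rcases vne v with h | h <;> [exact h h0; exact h h1])
  simp only [Ya, Set.mem_setOf_eq]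
  rw [Ainv_smul0, Ainv_smul1, abs_div, habs16]
  linarith

lemma hXb : B • Ybᶜ ⊆ Xb := by
  rintro w ⟨v, hv, rfl⟩
  simp only [Yb, Set.mem_compl_iff, Set.mem_setOf_eq, not_lt] at hv
  have hu : 0 < |v.1 0 + v.1 1| := abs_pos_of hv (by
    rintro ⟨h1, h0⟩
    rcases vne v with h | h <;> apply h <;> linarith)
  simp only [Xb, Set.mem_setOf_eq]
  rw [B_smul0, B_smul1,
    show 15 * v.1 0 + 17 * v.1 1 - (17 * v.1 0 + 15 * v.1 1) = 2 * (v.1 1 - v.1 0) from by ring,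
    show 17 * v.1 0 + 15 * v.1 1 + (15 * v.1 0 + 17 * v.1 1) = 32 * (v.1 0 + v.1 1) from by ring,
    abs_mul, abs_mul, habs2, habs32]
  linarith

lemma hYb : B⁻¹ • Xbᶜ ⊆ Yb := by
  rintro w ⟨v, hv, rfl⟩
  simp only [Xb, Set.mem_compl_iff, Set.mem_setOf_eq, not_lt] at hv
  have hd : 0 < |v.1 1 - v.1 0| := abs_pos_of hv (by
    rintro ⟨h1, h0⟩
    rcases vne v with h | h <;> apply h <;> linarith)
  simp only [Yb, Set.mem_setOf_eq]
  rw [Binv_smul0, Binv_smul1,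
    show (17 * v.1 0 - 15 * v.1 1) / 64 + (17 * v.1 1 - 15 * v.1 0) / 64
      = (v.1 0 + v.1 1) / 32 from by ring,
    show (17 * v.1 1 - 15 * v.1 0) / 64 - (17 * v.1 0 - 15 * v.1 1) / 64
      = (v.1 1 - v.1 0) / 2 from by ring,
    abs_div, abs_div, habs2, habs32]
  linarith

lemma dXaYa : Xa ∩ Ya = ∅ := by
  ext v; simp only [Xa, Ya, Set.mem_inter_iff, Set.mem_setOf_eq, Set.mem_empty_iff_false,
    iff_false, not_and, not_lt]
  intro h
  have := abs_nonneg (v.1 0); have := abs_nonneg (v.1 1)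
  linarith

lemma dXbYb : Xb ∩ Yb = ∅ := by
  ext v; simp only [Xb, Yb, Set.mem_inter_iff, Set.mem_setOf_eq, Set.mem_empty_iff_false,
    iff_false, not_and, not_lt]
  intro h
  have := abs_nonneg (v.1 0 + v.1 1); have := abs_nonneg (v.1 1 - v.1 0)
  linarith

lemma cross_disj (v : V2) : v ∈ Xa ∪ Ya → v ∈ Xb ∪ Yb → False := by
  have a1 : |v.1 0 + v.1 1| ≤ |v.1 0| + |v.1 1| := abs_add_le _ _
  have a2 : |v.1 1 - v.1 0| ≤ |v.1 0| + |v.1 1| := by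
    calc |v.1 1 - v.1 0| ≤ |v.1 1| + |v.1 0| := abs_sub _ _
    _ = |v.1 0| + |v.1 1| := by ring
  have a3 : |v.1 0| - |v.1 1| ≤ |v.1 0 + v.1 1| := by
    have h := abs_sub_abs_le_abs_sub (v.1 0) (-(v.1 1))
    rw [abs_neg, sub_neg_eq_add] at h
    exact h
  have a4 : |v.1 1| - |v.1 0| ≤ |v.1 0 + v.1 1| := by
    have h := abs_sub_abs_le_abs_sub (v.1 1) (-(v.1 0))
    rw [abs_neg, sub_neg_eq_add, add_comm] at h
    exact h
  have a5 : |v.1 0| - |v.1 1| ≤ |v.1 1 - v.1 0| := by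
    have h := abs_sub_abs_le_abs_sub (v.1 0) (v.1 1)
    rw [abs_sub_comm] at h
    exact h
  have a6 : |v.1 1| - |v.1 0| ≤ |v.1 1 - v.1 0| := abs_sub_abs_le_abs_sub _ _
  have b0 := abs_nonneg (v.1 0); have b1 := abs_nonneg (v.1 1)
  rintro (h1 | h1) (h2 | h2) <;>
    simp only [Xa, Ya, Xb, Yb, Set.mem_setOf_eq] at h1 h2 <;> linarith


lemma XbsubYbc : Xb ⊆ Ybᶜ := by
  intro v hv hv2
  exact (Set.eq_empty_iff_forall_notMem.mp dXbYb v) ⟨hv, hv2⟩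

lemma pow_maps (n : ℕ) : (B ^ (n+1)) • Ybᶜ ⊆ Xb := by
  induction n with
  | zero => simpa using hXb
  | succ n ih =>
    have : B ^ (n+2) = B ^ (n+1) * B := by rw [pow_succ]
    rw [this, mul_smul]
    calc B ^ (n+1) • B • Ybᶜ ⊆ B ^ (n+1) • Xb := Set.smul_set_mono hXb
    _ ⊆ B ^ (n+1) • Ybᶜ := Set.smul_set_mono XbsubYbc
    _ ⊆ Xb := ih

lemma AYsubYbc : Xa ∪ Ya ⊆ Ybᶜ := fun v hv hv2 => cross_disj v hv (Or.inr hv2)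

def c (i : ℕ) : GL2 := B ^ i * A * (B ^ i)⁻¹
def Xs (i : ℕ) : Set V2 := B ^ i • Xa
def Ys (i : ℕ) : Set V2 := B ^ i • Ya

lemma shift_disj {S T : Set V2} (hS : S ⊆ Xa ∪ Ya) (hT : T ⊆ Xa ∪ Ya) {i j : ℕ}
    (hij : i < j) : Disjoint (B ^ i • S) (B ^ j • T) := by
  rw [Set.disjoint_left]
  rintro x ⟨u, hu, rfl⟩ ⟨w, hw, hxw⟩
  have hj : B ^ j = B ^ i * B ^ (j - i) := by
    rw [← pow_add]
    congr 1
    omega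
  have hxw' : (B ^ i * B ^ (j - i)) • w = B ^ i • u := hj ▸ hxw
  rw [mul_smul] at hxw'
  have heq : u = B ^ (j - i) • w := smul_left_cancel _ hxw'.symm
  have hk : ∃ m, j - i = m + 1 := ⟨j - i - 1, by omega⟩
  obtain ⟨m, hm⟩ := hk
  have hw2 : (B ^ (j-i)) • w ∈ Xb := by
    rw [hm]
    exact pow_maps m (Set.smul_mem_smul_set (AYsubYbc (hT hw)))
  exact cross_disj u (hS hu) (Or.inl (heq ▸ hw2))

lemma same_disj : ∀ i, Disjoint (Xs i) (Ys i) := by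
  intro i
  rw [Set.disjoint_left]
  rintro x ⟨u, hu, rfl⟩ ⟨w, hw, hxw⟩
  have heq : u = w := smul_left_cancel _ hxw.symm
  exact (Set.eq_empty_iff_forall_notMem.mp dXaYa u) ⟨hu, heq ▸ hw⟩

lemma v0ne : (![1, 0] : Fin 2 → ℚ) ≠ 0 := by
  intro h
  have := congrFun h 0
  norm_num at this

lemma hXnonempty : ∀ i, (Xs i).Nonempty := by
  intro i
  refine ⟨B ^ i • ⟨![1,0], v0ne⟩, Set.smul_mem_smul_set ?_⟩
  simp [Xa]

lemma hXdisj : Pairwise (Function.onFun Disjoint Xs) := by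
  intro i j hij
  rcases lt_or_gt_of_ne hij with h | h
  · exact shift_disj Set.subset_union_left Set.subset_union_left h
  · exact (shift_disj Set.subset_union_left Set.subset_union_left h).symm

lemma hYdisj : Pairwise (Function.onFun Disjoint Ys) := by
  intro i j hij
  rcases lt_or_gt_of_ne hij with h | h
  · exact shift_disj Set.subset_union_right Set.subset_union_right h
  · exact (shift_disj Set.subset_union_right Set.subset_union_right h).symm

lemma hXYdisj : ∀ i j, Disjoint (Xs i) (Ys j) := by
  intro i j
  rcases lt_trichotomy i j with h | h | h
  · exact shift_disj Set.subset_union_left Set.subset_union_right h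
  · exact h ▸ same_disj i
  · exact (shift_disj Set.subset_union_right Set.subset_union_left h).symm

lemma hX : ∀ i, c i • (Ys i)ᶜ ⊆ Xs i := by
  intro i
  have h1 : (Ys i)ᶜ = B ^ i • Yaᶜ := by rw [Ys, Set.smul_set_compl]
  rw [h1, Xs, ← mul_smul,
    show c i * B ^ i = B ^ i * A from by rw [c]; group, mul_smul]
  exact Set.smul_set_mono hXa

lemma hY : ∀ i, (c)⁻¹ i • (Xs i)ᶜ ⊆ Ys i := by
  intro i
  have hc : (c)⁻¹ i = B ^ i * A⁻¹ * (B ^ i)⁻¹ := by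
    show (c i)⁻¹ = _
    rw [c]
    group
  have h1 : (Xs i)ᶜ = B ^ i • Xaᶜ := by rw [Xs, Set.smul_set_compl]
  rw [hc, h1, Ys, ← mul_smul,
    show B ^ i * A⁻¹ * (B ^ i)⁻¹ * B ^ i = B ^ i * A⁻¹ from by group, mul_smul]
  exact Set.smul_set_mono hYa

/-- The free group of countable rank embeds into GL₂(ℚ). -/
theorem rho_injective : Function.Injective (FreeGroup.lift c) :=
  FreeGroup.injective_lift_of_ping_pong c Xs Ys hXnonempty hXdisj hYdisj hXYdisj hX hY


def rho : FreeGroup ℕ →* GL2 := FreeGroup.lift c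

lemma rho_inj : Function.Injective rho := rho_injective

universe u
variable {G : Type u} [Group G] {k : ℕ} (g : Fin k → G)

/-- The space of homomorphisms `G →* FreeGroup ℕ`. -/
abbrev Xsp (G : Type u) [Group G] := G →* FreeGroup ℕ

abbrev σv (k : ℕ) := Fin k × Bool × Fin 2 × Fin 2
abbrev R (k : ℕ) := MvPolynomial (σv k) ℚ

def vals (φ : Xsp G) : σv k → ℚ :=
  fun q => (cond q.2.1 (rho (φ (g q.1))) (rho (φ (g q.1)))⁻¹).val q.2.2.1 q.2.2.2

def ev (φ : Xsp G) : R k →+* ℚ := MvPolynomial.eval (vals g φ)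

def gen (i : Fin k) (s : Bool) : Matrix (Fin 2) (Fin 2) (R k) :=
  Matrix.of fun r c => MvPolynomial.X (i, s, r, c)

def Pm (u : FreeGroup (Fin k)) : Matrix (Fin 2) (Fin 2) (R k) :=
  ((u.toWord).map fun p => gen p.1 p.2).prod

def π : FreeGroup (Fin k) →* G := FreeGroup.lift g

lemma pm_eval (φ : Xsp G) (u : FreeGroup (Fin k)) :
    (Pm u).map (ev g φ) = (rho (φ (π g u))).val := by
  have hχ : rho.comp (φ.comp (π g)) = FreeGroup.lift (fun i => rho (φ (g i))) := by
    apply FreeGroup.ext_hom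
    intro a
    simp [π]
  have h1 : rho (φ (π g u)) = FreeGroup.lift (fun i => rho (φ (g i))) u := by
    rw [← hχ]; rfl
  rw [h1]
  conv_rhs => rw [← FreeGroup.mk_toWord (x := u)]
  rw [FreeGroup.lift_mk]
  have h2 : ((ev g φ).mapMatrix : Matrix (Fin 2) (Fin 2) (R k) →+* Mat)
      (((u.toWord).map fun p => gen p.1 p.2).prod)
      = (((u.toWord).map fun p => gen p.1 p.2).map ((ev g φ).mapMatrix)).prod :=
    map_list_prod _ _
  have h3 : (Units.coeHom Mat)
      ((u.toWord.map fun x => cond x.2 (rho (φ (g x.1))) (rho (φ (g x.1)))⁻¹).prod)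
      = ((u.toWord.map fun x => cond x.2 (rho (φ (g x.1))) (rho (φ (g x.1)))⁻¹).map
          (Units.coeHom Mat)).prod :=
    map_list_prod _ _
  show ((ev g φ).mapMatrix : Matrix (Fin 2) (Fin 2) (R k) →+* Mat) (Pm u) = _
  rw [Pm, h2]
  show _ = (Units.coeHom Mat) _
  rw [h3, List.map_map, List.map_map]
  congr 1
  apply List.map_congr_left
  intro p _
  ext r c
  cases p with
  | mk i s =>
    cases s <;>
      simp [ev, gen, vals, Matrix.coe_units_inv]

/-- zero sets -/
def Zs (S : Set (R k)) : Set (Xsp G) := {φ | ∀ f ∈ S, ev g φ f = 0}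

/-- the closed sets -/
def Cl : Set (Set (Xsp G)) := {C | ∃ S : Set (R k), C = Zs g S}

lemma univ_mem : Set.univ ∈ Cl g := ⟨∅, by ext φ; simp [Zs]⟩

lemma empty_mem : ∅ ∈ Cl g := ⟨{1}, by ext φ; simp [Zs]⟩

lemma inter_mem {C D : Set (Xsp G)} (hC : C ∈ Cl g) (hD : D ∈ Cl g) : C ∩ D ∈ Cl g := by
  obtain ⟨S, rfl⟩ := hC; obtain ⟨T, rfl⟩ := hD
  refine ⟨S ∪ T, ?_⟩
  ext φ
  constructor
  · rintro ⟨h1, h2⟩ f hf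
    rcases hf with hf | hf
    exacts [h1 f hf, h2 f hf]
  · intro h
    exact ⟨fun f hf => h f (Or.inl hf), fun f hf => h f (Or.inr hf)⟩

lemma union_mem {C D : Set (Xsp G)} (hC : C ∈ Cl g) (hD : D ∈ Cl g) : C ∪ D ∈ Cl g := by
  obtain ⟨S, rfl⟩ := hC; obtain ⟨T, rfl⟩ := hD
  refine ⟨S * T, ?_⟩
  ext φ
  constructor
  · rintro (h | h) f hf
    · rw [Set.mem_mul] at hf
      obtain ⟨p, hp, q, hq, rfl⟩ := hf
      rw [map_mul, h p hp, zero_mul]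
    · rw [Set.mem_mul] at hf
      obtain ⟨p, hp, q, hq, rfl⟩ := hf
      rw [map_mul, h q hq, mul_zero]
  · intro h
    by_contra hc
    have hc1 : φ ∉ Zs g S := fun m => hc (Or.inl m)
    have hc2 : φ ∉ Zs g T := fun m => hc (Or.inr m)
    obtain ⟨p, hp, hp0⟩ : ∃ p ∈ S, ev g φ p ≠ 0 := by
      by_contra hcc; push_neg at hcc; exact hc1 (fun f hf => hcc f hf)
    obtain ⟨q, hq, hq0⟩ : ∃ q ∈ T, ev g φ q ≠ 0 := by
      by_contra hcc; push_neg at hcc; exact hc2 (fun f hf => hcc f hf)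
    have : ev g φ (p * q) = 0 := h _ (Set.mul_mem_mul hp hq)
    rw [map_mul] at this
    exact hp0 (by
      rcases mul_eq_zero.mp this with h0 | h0
      · exact h0
      · exact absurd h0 hq0)

/-- vanishing ideal -/
def idl (C : Set (Xsp G)) : Ideal (R k) where
  carrier := {f | ∀ φ ∈ C, ev g φ f = 0}
  add_mem' := by intro a b ha hb φ hφ; rw [map_add, ha φ hφ, hb φ hφ, add_zero]
  zero_mem' := by intro φ hφ; rw [map_zero]
  smul_mem' := by intro c x hx φ hφ; rw [smul_eq_mul, map_mul, hx φ hφ, mul_zero]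

lemma Zs_idl {C : Set (Xsp G)} (hC : C ∈ Cl g) : Zs g (idl g C : Set (R k)) = C := by
  obtain ⟨S, rfl⟩ := hC
  ext φ
  constructor
  · intro h f hf
    exact h f (fun ψ hψ => hψ f hf)
  · intro h f hf
    exact hf φ h

lemma idl_lt {C D : Set (Xsp G)} (hC : C ∈ Cl g) (hD : D ∈ Cl g) (hlt : C ⊂ D) :
    idl g D < idl g C := by
  have hle : idl g D ≤ idl g C := fun f hf φ hφ => hf φ (hlt.1 hφ)
  refine lt_of_le_of_ne hle ?_
  intro heq
  have : D = C := by
    rw [← Zs_idl g hD, ← Zs_idl g hC, heq]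
  exact hlt.2 (this ▸ le_refl _)

def Irr (V : Set (Xsp G)) : Prop :=
  V.Nonempty ∧ ∀ C₁ ∈ Cl g, ∀ C₂ ∈ Cl g, V ⊆ C₁ ∪ C₂ → V ⊆ C₁ ∨ V ⊆ C₂

lemma wf_rel : WellFounded (fun C D : Set (Xsp G) => C ⊂ D ∧ C ∈ Cl g ∧ D ∈ Cl g) := by
  have wf : WellFounded ((· > ·) : Ideal (R k) → Ideal (R k) → Prop) := by
    have : IsNoetherian (R k) (R k) := by
      have : IsNoetherianRing (R k) := inferInstance
      exact this
    exact (isNoetherian_iff (R := R k) (M := R k)).mp this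
  apply Subrelation.wf (r := InvImage (· > ·) (idl g))
  · intro C D h
    exact idl_lt g h.2.1 h.2.2 h.1
  · exact InvImage.wf _ wf

lemma foldr_mem (L : List (Set (Xsp G))) (x : Xsp G) :
    x ∈ L.foldr (· ∪ ·) (∅ : Set (Xsp G)) ↔ ∃ V ∈ L, x ∈ V := by
  induction L with
  | nil => simp
  | cons C L ih => simp [List.foldr_cons, ih]

lemma foldr_cl {L : List (Set (Xsp G))} (h : ∀ V ∈ L, V ∈ Cl g) :
    L.foldr (· ∪ ·) (∅ : Set (Xsp G)) ∈ Cl g := by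
  induction L with
  | nil => exact empty_mem g
  | cons C L ih =>
    exact union_mem g (h C (by simp)) (ih fun V hV => h V (List.mem_cons_of_mem _ hV))

/-- decomposition into irreducible closed subsets -/
lemma decomp : ∀ C : Set (Xsp G), C ∈ Cl g → ∃ L : List (Set (Xsp G)),
    (∀ V ∈ L, V ∈ Cl g ∧ Irr g V) ∧ ∀ φ ∈ C, ∃ V ∈ L, φ ∈ V := by
  intro C
  induction C using WellFounded.induction (wf_rel g) with
  | _ C IH =>
  intro hC
  by_cases hne : C = ∅
  · exact ⟨[], by simp, by simp [hne]⟩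
  by_cases hirr : Irr g C
  · exact ⟨[C], by simp [hC, hirr], fun φ hφ => ⟨C, by simp, hφ⟩⟩
  · have hCne : C.Nonempty := Set.nonempty_iff_ne_empty.mpr hne
    rw [Irr] at hirr
    push_neg at hirr
    obtain ⟨C₁, hC₁, C₂, hC₂, hsub, hn1, hn2⟩ := hirr hCne
    have hD1 : C ∩ C₁ ∈ Cl g := inter_mem g hC hC₁
    have hD2 : C ∩ C₂ ∈ Cl g := inter_mem g hC hC₂
    have hlt1 : C ∩ C₁ ⊂ C := by
      refine ⟨Set.inter_subset_left, fun hcc => hn1 ?_⟩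
      intro x hx
      exact (hcc hx).2
    have hlt2 : C ∩ C₂ ⊂ C := by
      refine ⟨Set.inter_subset_left, fun hcc => hn2 ?_⟩
      intro x hx
      exact (hcc hx).2
    obtain ⟨L₁, hL₁, hcov₁⟩ := IH (C ∩ C₁) ⟨hlt1, hD1, hC⟩ hD1
    obtain ⟨L₂, hL₂, hcov₂⟩ := IH (C ∩ C₂) ⟨hlt2, hD2, hC⟩ hD2
    refine ⟨L₁ ++ L₂, ?_, ?_⟩
    · intro V hV
      rcases List.mem_append.mp hV with h | h
      exacts [hL₁ V h, hL₂ V h]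
    · intro φ hφ
      rcases hsub hφ with h | h
      · obtain ⟨V, hV, hφV⟩ := hcov₁ φ ⟨hφ, h⟩
        exact ⟨V, List.mem_append.mpr (Or.inl hV), hφV⟩
      · obtain ⟨V, hV, hφV⟩ := hcov₂ φ ⟨hφ, h⟩
        exact ⟨V, List.mem_append.mpr (Or.inr hV), hφV⟩

/-- an irreducible set covered by finitely many closed sets is inside one of them -/
lemma irr_subset_of_cover {V : Set (Xsp G)} (hV : Irr g V) :
    ∀ L : List (Set (Xsp G)), (∀ C ∈ L, C ∈ Cl g) →
      (∀ φ ∈ V, ∃ C ∈ L, φ ∈ C) → ∃ C ∈ L, V ⊆ C := by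
  intro L
  induction L with
  | nil =>
    intro _ hcov
    obtain ⟨φ, hφ⟩ := hV.1
    obtain ⟨C, hC, -⟩ := hcov φ hφ
    exact absurd hC List.not_mem_nil
  | cons C L ih =>
    intro hcl hcov
    have hfold : V ⊆ C ∪ L.foldr (· ∪ ·) ∅ := by
      intro φ hφ
      rcases hcov φ hφ with ⟨D, hD, hφD⟩
      rcases List.mem_cons.mp hD with rfl | hD'
      · exact Or.inl hφD
      · exact Or.inr ((foldr_mem _ _).mpr ⟨D, hD', hφD⟩)
    rcases hV.2 C (hcl C (by simp)) _ (foldr_cl g fun D hD => hcl D (List.mem_cons_of_mem _ hD))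
        hfold with h | h
    · exact ⟨C, by simp, h⟩
    · obtain ⟨D, hD, hsub⟩ := ih (fun D hD => hcl D (List.mem_cons_of_mem _ hD))
        (fun φ hφ => (foldr_mem _ _).mp (h hφ))
      exact ⟨D, List.mem_cons_of_mem _ hD, hsub⟩

/-- a preferred preimage under `π` -/
def wt (hπ : Function.Surjective (π g)) (w : G) : FreeGroup (Fin k) := Function.surjInv hπ w

lemma wt_spec (hπ : Function.Surjective (π g)) (w : G) : π g (wt g hπ w) = w :=
  Function.surjInv_eq hπ w

/-- the equations cutting out `{φ | φ w = 1}` -/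
def wordSet (hπ : Function.Surjective (π g)) (w : G) : Set (R k) :=
  {p | ∃ r c : Fin 2, p = Pm (wt g hπ w) r c - (1 : Matrix (Fin 2) (Fin 2) (R k)) r c}

lemma one_entry (φ : Xsp G) (r c : Fin 2) :
    ev g φ ((1 : Matrix (Fin 2) (Fin 2) (R k)) r c) = (1 : Matrix (Fin 2) (Fin 2) ℚ) r c := by
  rcases eq_or_ne r c with rfl | hrc
  · simp [Matrix.one_apply]
  · simp [Matrix.one_apply, hrc]

lemma Zs_wordSet (hπ : Function.Surjective (π g)) (w : G) : Zs g (wordSet g hπ w) = {φ : Xsp G | φ w = 1} := by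
  ext φ
  simp only [Zs, wordSet, Set.mem_setOf_eq]
  constructor
  · intro hz
    have hent : ∀ r c, ev g φ (Pm (wt g hπ w) r c) = (1 : Matrix (Fin 2) (Fin 2) ℚ) r c := by
      intro r c
      have := hz _ ⟨r, c, rfl⟩
      rw [map_sub, sub_eq_zero] at this
      rw [this, one_entry]
    have hmat : (Pm (wt g hπ w)).map (ev g φ) = 1 := by
      ext r c
      rw [Matrix.map_apply]
      exact hent r c
    rw [pm_eval, wt_spec] at hmat
    have : rho (φ w) = 1 := Units.ext hmat
    have h1 : rho (φ w) = rho 1 := by rw [this, map_one]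
    exact rho_inj h1
  · rintro hw f ⟨r, c, rfl⟩
    rw [map_sub, sub_eq_zero, one_entry]
    have hmat : (Pm (wt g hπ w)).map (ev g φ) = (1 : Matrix (Fin 2) (Fin 2) ℚ) := by
      rw [pm_eval, wt_spec, hw, map_one, Units.val_one]
    rw [← hmat, Matrix.map_apply]

/-- the subgroup of elements killed by every hom in `V` -/
def K (V : Set (Xsp G)) : Subgroup G where
  carrier := {w | ∀ φ ∈ V, φ w = 1}
  one_mem' := by intro φ _; rw [map_one]
  mul_mem' := by intro a b ha hb φ hφ; rw [map_mul, ha φ hφ, hb φ hφ, one_mul]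
  inv_mem' := by intro a ha φ hφ; rw [map_inv, ha φ hφ, inv_one]

instance K_normal (V : Set (Xsp G)) : (K V).Normal := by
  constructor
  intro a ha x φ hφ
  rw [map_mul, map_mul, ha φ hφ, mul_one, map_inv, mul_inv_cancel]

def θ (V : Set (Xsp G)) : FreeGroup (Fin k) →* G ⧸ K V :=
  (QuotientGroup.mk' (K V)).comp (π g)

/-- a `Type 0` avatar of `G ⧸ K V` -/
def Q (V : Set (Xsp G)) : Type := FreeGroup (Fin k) ⧸ (θ g V).ker

instance (V : Set (Xsp G)) : Group (Q g V) := by unfold Q; infer_instance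

lemma θ_surj (hπ : Function.Surjective (π g)) (V : Set (Xsp G)) : Function.Surjective (θ g V) :=
  (QuotientGroup.mk'_surjective (K V)).comp hπ

def qiso (hπ : Function.Surjective (π g)) (V : Set (Xsp G)) : Q g V ≃* G ⧸ K V :=
  QuotientGroup.quotientKerEquivOfSurjective (θ g V) (θ_surj g hπ V)

def qhom (hπ : Function.Surjective (π g)) (V : Set (Xsp G)) : G →* Q g V :=
  (qiso g hπ V).symm.toMonoidHom.comp (QuotientGroup.mk' (K V))

lemma qhom_eq_one_iff (hπ : Function.Surjective (π g)) (V : Set (Xsp G)) (w : G) :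
    qhom g hπ V w = 1 ↔ w ∈ K V := by
  rw [qhom]
  simp only [MonoidHom.coe_comp, Function.comp_apply, MulEquiv.coe_toMonoidHom]
  rw [MulEquiv.map_eq_one_iff]
  rw [QuotientGroup.mk'_apply, QuotientGroup.eq_one_iff]

lemma frf_Q (hπ : Function.Surjective (π g)) {V : Set (Xsp G)} (hVcl : V ∈ Cl g) (hVirr : Irr g V) :
    IsFullyResiduallyFree (Q g V) := by
  intro s hs
  -- choose representatives
  have hmk : Function.Surjective (QuotientGroup.mk' (θ g V).ker) :=
    QuotientGroup.mk'_surjective _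
  classical
  let u : Q g V → FreeGroup (Fin k) := fun q => Function.surjInv hmk q
  have hu : ∀ q, QuotientGroup.mk' (θ g V).ker (u q) = q :=
    fun q => Function.surjInv_eq hmk q
  let wG : Q g V → G := fun q => π g (u q)
  have key : ∀ q ∈ s, ¬ V ⊆ Zs g (wordSet g hπ (wG q)) := by
    intro q hq hVs
    apply hs q hq
    have hK : wG q ∈ K V := by
      intro φ hφ
      have := hVs hφ
      rw [Zs_wordSet] at this
      exact this
    have hker : u q ∈ (θ g V).ker := by
      rw [MonoidHom.mem_ker, θ, MonoidHom.coe_comp, Function.comp_apply,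
        QuotientGroup.mk'_apply, QuotientGroup.eq_one_iff]
      exact hK
    rw [← hu q]
    exact (QuotientGroup.eq_one_iff (u q)).mpr hker
  set L : List (Set (Xsp G)) := s.toList.map (fun q => Zs g (wordSet g hπ (wG q))) with hL
  have hnotcov : ¬ ∀ φ ∈ V, ∃ C ∈ L, φ ∈ C := by
    intro hcov
    obtain ⟨C, hC, hsub⟩ := irr_subset_of_cover g hVirr L
      (by
        intro C hC
        rw [hL] at hC
        obtain ⟨q, _, rfl⟩ := List.mem_map.mp hC
        exact ⟨_, rfl⟩) hcov
    rw [hL] at hC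
    obtain ⟨q, hq, rfl⟩ := List.mem_map.mp hC
    exact key q (Finset.mem_toList.mp hq) hsub
  push_neg at hnotcov
  obtain ⟨φ, hφV, hφ⟩ := hnotcov
  have hker_le : ∀ x ∈ (θ g V).ker, (φ.comp (π g)) x = 1 := by
    intro x hx
    rw [MonoidHom.mem_ker, θ, MonoidHom.coe_comp, Function.comp_apply,
      QuotientGroup.mk'_apply, QuotientGroup.eq_one_iff] at hx
    exact hx φ hφV
  refine ⟨ℕ, QuotientGroup.lift _ (φ.comp (π g)) hker_le, ?_⟩
  intro q hq
  have h1 : QuotientGroup.lift _ (φ.comp (π g)) hker_le q = φ (π g (u q)) := by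
    conv_lhs => rw [← hu q]
    rfl
  intro hone
  have hone' : φ (π g (u q)) = 1 := h1.symm.trans hone
  apply hφ _ (List.mem_map.mpr ⟨q, Finset.mem_toList.mpr hq, rfl⟩)
  rw [Zs_wordSet]
  exact hone'


lemma K_mem_iff (V : Set (Xsp G)) (w : G) : w ∈ K V ↔ ∀ φ ∈ V, φ w = 1 := Iff.rfl

/-- Any nontrivial element of any free group survives a hom to `FreeGroup ℕ`. -/
lemma to_freeN {α : Type} (w : FreeGroup α) (hw : w ≠ 1) :
    ∃ ψ : FreeGroup α →* FreeGroup ℕ, ψ w ≠ 1 := by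
  classical
  set L := w.toWord with hLdef
  have hL : L ≠ [] := fun h => hw (FreeGroup.toWord_eq_nil_iff.mp h)
  obtain ⟨p, hp⟩ := List.exists_mem_of_ne_nil L hL
  set s : Finset α := (L.map Prod.fst).toFinset with hsdef
  set e := s.equivFin with hedef
  set j : α → ℕ := fun x => if h : x ∈ s then (e ⟨x, h⟩ : ℕ) else 0 with hjdef
  set t : ℕ → α := fun n => if h : n < s.card then (e.symm ⟨n, h⟩ : α) else p.1 with htdef
  have htj : ∀ x ∈ s, t (j x) = x := by
    intro x hx
    rw [hjdef]
    simp only [hx, dif_pos]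
    rw [htdef]
    simp only [Fin.is_lt, dif_pos, Fin.eta, Equiv.symm_apply_apply]
  have hmap : FreeGroup.map t (FreeGroup.map j w) = w := by
    conv_lhs => rw [← FreeGroup.mk_toWord (x := w)]
    rw [FreeGroup.map.mk, FreeGroup.map.mk]
    rw [List.map_map]
    conv_rhs => rw [← FreeGroup.mk_toWord (x := w)]
    congr 1
    have : ∀ q ∈ w.toWord, ((fun x => (t x.1, x.2)) ∘ fun x => (j x.1, x.2)) q = q := by
      intro q hq
      have hq1 : q.1 ∈ s := by
        rw [hsdef]
        rw [List.mem_toFinset]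
        exact List.mem_map.mpr ⟨q, hq, rfl⟩
      simp only [Function.comp_apply]
      rw [htj q.1 hq1]
    rw [List.map_congr_left this]
    exact List.map_id _
  refine ⟨FreeGroup.map j, ?_⟩
  intro h1
  apply hw
  rw [← hmap, h1, map_one]
end BMRZ

open BMRZ in
/-- Every finitely generated residually free group embeds into a direct product of finitely
many fully residually free groups. -/
theorem residuallyFree_embeds_in_product {G : Type*} [Group G]
    (hfg : Group.FG G) (h : IsResiduallyFree G) :
    ∃ (n : ℕ) (H : Fin n → FRFGroup) (φ : G →* (∀ i, (H i).carrier)),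
      Function.Injective φ := by
  classical
  obtain ⟨S, hS⟩ := Group.fg_def.mp hfg
  set k := S.card with hk
  set e := S.equivFin with he
  set g : Fin k → G := fun i => (e.symm i : G) with hg
  have hrange : Set.range g = (S : Set G) := by
    ext x
    constructor
    · rintro ⟨i, rfl⟩
      exact (e.symm i).2
    · intro hx
      exact ⟨e ⟨x, hx⟩, by rw [hg]; simp⟩
  have hπ : Function.Surjective (π g) := by
    rw [← MonoidHom.range_eq_top]
    rw [π, FreeGroup.range_lift_eq_closure, hrange, hS]
  obtain ⟨L, hL1, hL2⟩ := decomp g Set.univ (univ_mem g)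
  refine ⟨L.length, fun i => ⟨Q g (L.get i), frf_Q g hπ (hL1 _ (List.get_mem L i)).1
    (hL1 _ (List.get_mem L i)).2⟩, Pi.monoidHom (fun i => qhom g hπ (L.get i)), ?_⟩
  rw [injective_iff_map_eq_one]
  intro w hw
  by_contra hw1
  obtain ⟨α, φ₀, hφ₀⟩ := h w hw1
  obtain ⟨ψ, hψ⟩ := to_freeN (φ₀ w) hφ₀
  set φ : Xsp G := ψ.comp φ₀ with hφdef
  obtain ⟨V, hVL, hφV⟩ := hL2 φ (Set.mem_univ φ)
  obtain ⟨i, hi⟩ := List.get_of_mem hVL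
  have hne : qhom g hπ (L.get i) w ≠ 1 := by
    intro h1
    have h2 := (qhom_eq_one_iff g hπ (L.get i) w).mp h1
    have h3 := (K_mem_iff (L.get i) w).mp h2
    exact hψ (h3 φ (hi ▸ hφV))
  apply hne
  have := congrFun hw i
  exact this
end
end
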